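/- Let B be an RC-lattice on n elements. Then B is a basic block having nullity k if and only if B admits an adjunct representation B = C₀ ]^{b₁}_{a₁} C₁ ]^{b₂}_{a₂} C₂ ⋯ ]^{b_k}_{a_k} C_k into chains with aᵢ, bᵢ ∈ C₀ for all i, satisfying: (i) |Cᵢ| = 1 for all 1 ≤ i ≤ k; (ii) n = |C₀| + k; (iii) |Irr(B)| = k + m, where m is the number of distinct adjunct pairs (aᵢ, bᵢ) such that the open interval (aᵢ, bᵢ) of B is contained in Irr(B); and (iv) |C₀| = |Red(B)| + m. Moreover, in that case, if |Red(B)| = r then n = r + m + k. -/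

import Mathlib

/-- An element of a lattice is join-reducible if it is the join of two elements
both distinct from it. -/
def JoinReducible {α : Type*} [Lattice α] (x : α) : Prop :=
  ∃ y z : α, y ≠ x ∧ z ≠ x ∧ y ⊔ z = x

/-- An element of a lattice is meet-reducible if it is the meet of two elements
both distinct from it. -/
def MeetReducible {α : Type*} [Lattice α] (x : α) : Prop :=
  ∃ y z : α, y ≠ x ∧ z ≠ x ∧ y ⊓ z = x

/-- An element is reducible if it is join-reducible or meet-reducible. -/
def Reducible {α : Type*} [Lattice α] (x : α) : Prop :=
  JoinReducible x ∨ MeetReducible x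

/-- `Red(L)`: the set of reducible elements of the lattice. -/
def RedSet (α : Type*) [Lattice α] : Set α := {x | Reducible x}

/-- `Irr(L)`: the set of doubly irreducible (i.e. non-reducible) elements. -/
def IrrSet (α : Type*) [Lattice α] : Set α := {x | ¬ Reducible x}

/-- The cover graph of a poset: vertices are the elements, edges are covering pairs. -/
def coverGraph (α : Type*) [PartialOrder α] : SimpleGraph α where
  Adj x y := x ⋖ y ∨ y ⋖ x
  symm := ⟨fun _ _ h => h.symm⟩
  loopless := ⟨fun x h => by rcases h with h | h <;> exact h.lt.false⟩

/-- The nullity of a (finite) poset: `m - n + c` where `m` is the number of edges,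
`n` the number of vertices and `c` the number of connected components of the cover graph. -/
noncomputable def nullity (α : Type*) [PartialOrder α] : ℤ :=
  (Nat.card (coverGraph α).edgeSet : ℤ) - (Nat.card α : ℤ)
    + (Nat.card (coverGraph α).ConnectedComponent : ℤ)

/-- A block: a (finite) lattice whose greatest element is join-reducible and whose
least element is meet-reducible. -/
def IsBlock (α : Type*) [Lattice α] : Prop :=
  (∃ t : α, (∀ x, x ≤ t) ∧ JoinReducible t) ∧ (∃ b : α, (∀ x, b ≤ x) ∧ MeetReducible b)

/-- A block is a basic block if it is a one-element lattice, or has no doubly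
irreducible element, or removal of any doubly irreducible element reduces the
nullity by one. -/
def IsBasicBlock (α : Type*) [Lattice α] : Prop :=
  IsBlock α ∧ (Nat.card α = 1 ∨ IrrSet α = ∅ ∨
    ∀ x : α, x ∈ IrrSet α → nullity ↥({x}ᶜ : Set α) = nullity α - 1)

/-- `AdjunctRep C₀ s l` : the subset `s`, with the order induced from the ambient
lattice, is an adjunct of chains starting with the chain `C₀`; the list `l` records, in
order, the adjoined chains together with their adjunct pairs, i.e.
`s = C₀ ]^{b₁}_{a₁} C₁ ]^{b₂}_{a₂} C₂ ⋯ ]^{b_k}_{a_k} C_k` with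
`l = [(C₁,a₁,b₁), …, (C_k,a_k,b_k)]`.  In the step, the adjunct pair `(a,b)` lies in
the part `s` built so far, with `a < b` and `a` not covered by `b` in `s`, and the
ambient order on `s ∪ c` is exactly the adjunct order: for `x ∈ s` and `y ∈ c`,
`x ≤ y ↔ x ≤ a` and `y ≤ x ↔ b ≤ x`. -/
inductive AdjunctRep {α : Type*} [Lattice α] (C₀ : Set α) :
    Set α → List (Set α × α × α) → Prop
  | base (hchain : IsChain (· ≤ ·) C₀) (hne : C₀.Nonempty) : AdjunctRep C₀ C₀ []
  | step {s : Set α} {l : List (Set α × α × α)} (c : Set α) (a b : α)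
      (hs : AdjunctRep C₀ s l) (hc : IsChain (· ≤ ·) c) (hcne : c.Nonempty)
      (hdisj : Disjoint s c) (ha : a ∈ s) (hb : b ∈ s) (hab : a < b)
      (hnotcov : ∃ z ∈ s, a < z ∧ z < b)
      (hord : ∀ x ∈ s, ∀ y ∈ c, (x ≤ y ↔ x ≤ a) ∧ (y ≤ x ↔ b ≤ x)) :
      AdjunctRep C₀ (s ∪ c) (l ++ [(c, a, b)])

namespace Stmt7Aux
open Set

section Misc
variable {α : Type*} [Lattice α] [Fintype α]

lemma exists_top (α : Type*) [Lattice α] [Fintype α] [Nonempty α] : ∃ T : α, ∀ x, x ≤ T :=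
  ⟨Finset.univ.sup' Finset.univ_nonempty id, fun x => Finset.le_sup' id (Finset.mem_univ x)⟩

lemma exists_bot (α : Type*) [Lattice α] [Fintype α] [Nonempty α] : ∃ B : α, ∀ x, B ≤ x :=
  ⟨Finset.univ.inf' Finset.univ_nonempty id, fun x => Finset.inf'_le id (Finset.mem_univ x)⟩

/-- For a join-irreducible element with something below it, the set of elements
strictly below has a greatest element. -/
lemma exists_greatest_lt {x : α} (hx : ¬ JoinReducible x) (hne : ∃ w, w < x) :
    ∃ a, a < x ∧ ∀ w, w < x → w ≤ a := by
  classical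
  obtain ⟨w0, hw0⟩ := hne
  set s : Finset α := Finset.univ.filter (fun w => w < x) with hs
  have hsne : s.Nonempty := ⟨w0, by simp [hs, hw0]⟩
  refine ⟨s.sup' hsne id, ?_, fun w hw => Finset.le_sup' id (by simp [hs, hw])⟩
  refine Finset.sup'_induction hsne id (p := (· < x)) ?_ ?_
  · intro a₁ h₁ a₂ h₂
    rcases lt_or_eq_of_le (sup_le h₁.le h₂.le) with h | h
    · exact h
    · exact absurd ⟨a₁, a₂, h₁.ne, h₂.ne, h⟩ hx
  · intro b hb; simpa [hs] using hb

lemma exists_least_gt {x : α} (hx : ¬ MeetReducible x) (hne : ∃ w, x < w) :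
    ∃ b, x < b ∧ ∀ w, x < w → b ≤ w := by
  obtain ⟨a, ha, hmax⟩ := exists_greatest_lt (α := αᵒᵈ) (x := OrderDual.toDual x)
    (by
      rintro ⟨y, z, hy, hz, hyz⟩
      exact hx ⟨OrderDual.ofDual y, OrderDual.ofDual z, hy, hz, hyz⟩)
    (by obtain ⟨w, hw⟩ := hne; exact ⟨OrderDual.toDual w, hw⟩)
  exact ⟨OrderDual.ofDual a, ha, fun w hw => hmax (OrderDual.toDual w) hw⟩

end Misc

section Connect
variable {β : Type*} [PartialOrder β] [Fintype β]

lemma reachable_top (T : β) (hT : ∀ y, y ≤ T) (x : β) : (coverGraph β).Reachable x T := by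
  classical
  generalize hcard : (Finset.univ.filter (fun z => x < z)).card = N
  induction N using Nat.strong_induction_on generalizing x with
  | _ N ih =>
    by_cases hxT : x = T
    · exact hxT ▸ SimpleGraph.Reachable.refl x
    · have hxlt : x < T := lt_of_le_of_ne (hT x) hxT
      have hne : (Finset.univ.filter (fun z => x < z)).Nonempty := ⟨T, by simp [hxlt]⟩
      obtain ⟨y, hy, hymin⟩ : ∃ m ∈ Finset.univ.filter (fun z => x < z), ∀ z ∈ Finset.univ.filter (fun z => x < z), ¬ z < m :=
        let ⟨m, hm⟩ := Finset.exists_minimal hne; ⟨m, hm.1, fun z hz hlt => hlt.not_ge (hm.2 hz hlt.le)⟩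
      have hxy : x < y := by simpa using hy
      have hcov : x ⋖ y := by
        refine ⟨hxy, fun z hz hzy => ?_⟩
        exact hymin z (by simp [hz]) hzy
      have hsub : (Finset.univ.filter (fun z => y < z)) ⊂ (Finset.univ.filter (fun z => x < z)) := by
        refine Finset.ssubset_iff_of_subset (fun z hz => by
          simp only [Finset.mem_filter, Finset.mem_univ, true_and] at hz ⊢
          exact hxy.trans hz) |>.2 ⟨y, by simp [hxy], by simp⟩
      have hlt : (Finset.univ.filter (fun z => y < z)).card < N := by
        rw [← hcard]; exact Finset.card_lt_card hsub
      have hreach : (coverGraph β).Reachable y T := ih _ hlt y rfl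
      exact (SimpleGraph.Adj.reachable (by exact Or.inl hcov)).trans hreach

lemma card_cc_eq_one (T : β) (hT : ∀ y, y ≤ T) :
    Nat.card (coverGraph β).ConnectedComponent = 1 := by
  rw [Nat.card_eq_one_iff_unique]
  constructor
  · constructor
    intro c d
    induction c using SimpleGraph.ConnectedComponent.ind with
    | _ v =>
      induction d using SimpleGraph.ConnectedComponent.ind with
      | _ w =>
        exact SimpleGraph.ConnectedComponent.sound
          ((reachable_top T hT v).trans (reachable_top T hT w).symm)
  · exact ⟨(coverGraph β).connectedComponentMk T⟩

end Connect

section ChainCount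
variable {α : Type*} [PartialOrder α] [Fintype α]

/-- Consecutive pairs of a subset. -/
def consPairs (S : Set α) : Set (α × α) :=
  {p | p.1 ∈ S ∧ p.2 ∈ S ∧ p.1 < p.2 ∧ ¬ ∃ z ∈ S, p.1 < z ∧ z < p.2}

lemma chain_exists_max {S : Set α} (hc : IsChain (· ≤ ·) S) (hne : S.Nonempty) :
    ∃ M ∈ S, ∀ y ∈ S, y ≤ M := by
  classical
  have hne' : S.toFinset.Nonempty := by rwa [Set.toFinset_nonempty]
  obtain ⟨M, hM, hmax⟩ : ∃ m ∈ S.toFinset, ∀ z ∈ S.toFinset, ¬ m < z :=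
    let ⟨m, hm⟩ := Finset.exists_maximal hne'; ⟨m, hm.1, fun z hz hlt => hlt.not_ge (hm.2 hz hlt.le)⟩
  rw [Set.mem_toFinset] at hM
  refine ⟨M, hM, fun y hy => ?_⟩
  by_cases hyM : y = M
  · exact hyM.le
  · rcases hc hy hM hyM with h | h
    · exact h
    · exact absurd (lt_of_le_of_ne h (fun h' => hyM h'.symm)) (hmax y (Set.mem_toFinset.2 hy))

lemma chain_exists_min {S : Set α} (hc : IsChain (· ≤ ·) S) (hne : S.Nonempty) :
    ∃ M ∈ S, ∀ y ∈ S, M ≤ y := by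
  classical
  have hne' : S.toFinset.Nonempty := by rwa [Set.toFinset_nonempty]
  obtain ⟨M, hM, hmin⟩ : ∃ m ∈ S.toFinset, ∀ z ∈ S.toFinset, ¬ z < m :=
    let ⟨m, hm⟩ := Finset.exists_minimal hne'; ⟨m, hm.1, fun z hz hlt => hlt.not_ge (hm.2 hz hlt.le)⟩
  rw [Set.mem_toFinset] at hM
  refine ⟨M, hM, fun y hy => ?_⟩
  by_cases hyM : y = M
  · exact hyM.ge
  · rcases hc hy hM hyM with h | h
    · exact absurd (lt_of_le_of_ne h hyM) (by simpa using hmin y (Set.mem_toFinset.2 hy))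
    · exact h

lemma consPairs_ncard {S : Set α} (hc : IsChain (· ≤ ·) S) (hne : S.Nonempty) :
    (consPairs S).ncard + 1 = S.ncard := by
  classical
  generalize hN : S.ncard = N
  induction N using Nat.strong_induction_on generalizing S with
  | _ N ih =>
    obtain ⟨M, hM, hMmax⟩ := chain_exists_max hc hne
    by_cases h1 : S = {M}
    · subst h1
      have hemp : consPairs ({M} : Set α) = ∅ := by
        ext ⟨y, z⟩
        simp only [consPairs, Set.mem_setOf_eq, Set.mem_singleton_iff, Set.mem_empty_iff_false,
          iff_false, not_and]
        intro hy hz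
        subst hy; subst hz
        intro h
        first
          | exact absurd h.1 (lt_irrefl _)
          | exact absurd h (lt_irrefl _)
      rw [hemp]
      simp only [Set.ncard_empty]
      rw [Set.ncard_singleton] at hN
      omega
    · set S' := S \ {M} with hS'
      have hS'sub : S' ⊆ S := Set.diff_subset
      have hS'ne : S'.Nonempty := by
        rcases Set.exists_of_ssubset (ssubset_of_ne_of_subset (Ne.symm h1)
          (Set.singleton_subset_iff.2 hM)) with ⟨y, hy, hy'⟩
        exact ⟨y, hy, by simpa using hy'⟩
      have hS'chain : IsChain (· ≤ ·) S' := hc.mono hS'sub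
      have hMnot : M ∉ S' := by simp [hS']
      have hcard' : S'.ncard = N - 1 := by
        rw [hS', Set.ncard_diff_singleton_of_mem hM, hN]
      have hN2 : 2 ≤ N := by
        rcases Nat.lt_or_ge N 2 with h | h
        · exfalso
          have hN1 : N ≠ 0 := by
            rw [← hN]
            exact fun h0 => by
              have := (Set.ncard_eq_zero (Set.toFinite S)).1 h0
              exact hne.ne_empty this
          have : N = 1 := by omega
          rw [this] at hN
          obtain ⟨a, ha⟩ := Set.ncard_eq_one.1 hN
          apply h1
          rw [ha]
          rw [ha] at hM
          simp only [Set.mem_singleton_iff] at hM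
          rw [hM]
        · exact h
      obtain ⟨M', hM', hM'max⟩ := chain_exists_max hS'chain hS'ne
      have hM'M : M' < M := lt_of_le_of_ne (hMmax M' (hS'sub hM'))
        (by rintro rfl; exact hMnot hM')
      have hlt : ∀ y ∈ S, y ≠ M → y ≤ M' := by
        intro y hy hyM
        exact hM'max y ⟨hy, by simpa using hyM⟩
      have hsplit : consPairs S = insert (M', M) (consPairs S') := by
        ext ⟨y, z⟩
        simp only [consPairs, Set.mem_setOf_eq, Set.mem_insert_iff, Prod.mk.injEq]
        constructor
        · rintro ⟨hy, hz, hyz, hbet⟩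
          by_cases hzM : z = M
          · left
            refine ⟨?_, hzM⟩
            by_contra hne'
            have hy' : y ∈ S' := by
              refine ⟨hy, ?_⟩
              simp only [Set.mem_singleton_iff]
              intro hEq
              rw [hEq, hzM] at hyz
              exact absurd hyz (lt_irrefl _)
            exact hbet ⟨M', hS'sub hM', lt_of_le_of_ne (hM'max y hy') hne', hzM ▸ hM'M⟩
          · right
            have hyM : y ≠ M := by
              rintro rfl
              exact absurd ((hMmax z hz).trans_lt hyz) (lt_irrefl _)
            exact ⟨⟨hy, by simpa using hyM⟩, ⟨hz, by simpa using hzM⟩, hyz,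
              fun ⟨w, hw, h1', h2'⟩ => hbet ⟨w, hS'sub hw, h1', h2'⟩⟩
        · rintro (⟨h1', h2'⟩ | ⟨hy, hz, hyz, hbet⟩)
          · subst h1'; subst h2'
            refine ⟨hS'sub hM', hM, hM'M, ?_⟩
            rintro ⟨w, hw, h1', h2'⟩
            exact absurd h1' (not_lt_of_ge (hlt w hw h2'.ne))
          · refine ⟨hS'sub hy, hS'sub hz, hyz, ?_⟩
            rintro ⟨w, hw, h1', h2'⟩
            have hwM : w ≠ M := by
              intro h
              have hzM' : z ≤ M' := hM'max z hz
              have : w < M := (h2'.trans_le hzM').trans hM'M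
              rw [h] at this
              exact absurd this (lt_irrefl M)
            exact hbet ⟨w, ⟨hw, by simpa using hwM⟩, h1', h2'⟩
      have hnotmem : (M', M) ∉ consPairs S' := by
        rintro ⟨-, hz, -, -⟩
        exact hMnot hz
      have hins : (consPairs S).ncard = (consPairs S').ncard + 1 := by
        rw [hsplit, Set.ncard_insert_of_notMem hnotmem (Set.toFinite _)]
      have := ih (N - 1) (by omega) hS'chain hS'ne hcard'
      omega

end ChainCount

section Local
variable {α : Type*} [Lattice α] [Fintype α]

lemma covBy_target_iff {x a : α} (ha : a < x) (hamax : ∀ w, w < x → w ≤ a) :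
    ∀ y, y ⋖ x ↔ y = a := by
  intro y
  constructor
  · intro hy
    have h1 : y ≤ a := hamax y hy.1
    rcases lt_or_eq_of_le h1 with h | h
    · exact absurd ha (hy.2 h)
    · exact h
  · rintro rfl
    exact ⟨ha, fun w hw1 hw2 => absurd (hamax w hw2) (not_le_of_gt hw1)⟩

lemma covBy_source_iff {x b : α} (hb : x < b) (hbmin : ∀ w, x < w → b ≤ w) :
    ∀ z, x ⋖ z ↔ z = b := by
  intro z
  constructor
  · intro hz
    have h1 : b ≤ z := hbmin z hz.1
    rcases lt_or_eq_of_le h1 with h | h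
    · exact absurd h (hz.2 hb)
    · exact h.symm
  · rintro rfl
    exact ⟨hb, fun w hw1 hw2 => absurd (hbmin w hw1) (not_le_of_gt hw2)⟩

lemma subtype_covBy_iff {x a b : α} (ha : a < x) (hb : x < b)
    (hamax : ∀ w, w < x → w ≤ a) (hbmin : ∀ w, x < w → b ≤ w)
    (y z : ({x}ᶜ : Set α)) :
    y ⋖ z ↔ ((y : α) ⋖ (z : α) ∨ ((y : α) = a ∧ (z : α) = b ∧ Set.Ioo a b = {x})) := by
  constructor
  · intro hyz
    have hlt : (y : α) < z := hyz.1
    by_cases hcov : (y : α) ⋖ (z : α)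
    · exact Or.inl hcov
    · right
      have hbet : ∃ w, (y : α) < w ∧ w < z := by
        by_contra h
        push_neg at h
        exact hcov ⟨hlt, fun w hw1 hw2 => h w hw1 hw2⟩
      have hallx : ∀ w, (y : α) < w → w < z → w = x := by
        intro w hw1 hw2
        by_contra hwx
        have h1' : y < (⟨w, hwx⟩ : ({x}ᶜ : Set α)) := by exact_mod_cast hw1
        have h2' : (⟨w, hwx⟩ : ({x}ᶜ : Set α)) < z := by exact_mod_cast hw2
        exact hyz.2 h1' h2' 
      obtain ⟨w0, hw01, hw02⟩ := hbet
      have hw0x : w0 = x := hallx w0 hw01 hw02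
      subst hw0x
      have hyx : (y : α) ⋖ w0 := by
        refine ⟨hw01, fun w hw1 hw2 => ?_⟩
        have := hallx w hw1 (hw2.trans hw02)
        exact absurd (this ▸ hw2) (lt_irrefl _)
      have hxz : w0 ⋖ (z : α) := by
        refine ⟨hw02, fun w hw1 hw2 => ?_⟩
        have := hallx w (hw01.trans hw1) hw2
        exact absurd (this ▸ hw1) (lt_irrefl _)
      have hya : (y : α) = a := (covBy_target_iff ha hamax _).1 hyx
      have hzb : (z : α) = b := (covBy_source_iff hb hbmin _).1 hxz
      refine ⟨hya, hzb, ?_⟩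
      ext w
      simp only [Set.mem_Ioo, Set.mem_singleton_iff]
      constructor
      · intro hw
        exact hallx w (hya ▸ hw.1) (hzb ▸ hw.2)
      · rintro rfl
        exact ⟨hya ▸ hw01, hzb ▸ hw02⟩
  · rintro (hcov | ⟨hya, hzb, hIoo⟩)
    · refine ⟨hcov.1, fun w hw1 hw2 => hcov.2 hw1 hw2⟩
    · have hyz : (y : α) < (z : α) := by rw [hya, hzb]; exact ha.trans hb
      refine ⟨hyz, fun w hw1 hw2 => ?_⟩
      have : (w : α) ∈ Set.Ioo a b := ⟨hya ▸ hw1, hzb ▸ hw2⟩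
      rw [hIoo, Set.mem_singleton_iff] at this
      exact w.2 this

lemma nullity_compl (x : α) (a b : α) (ha : a < x) (hb : x < b)
    (hamax : ∀ w, w < x → w ≤ a) (hbmin : ∀ w, x < w → b ≤ w)
    (T : α) (hT : ∀ y, y ≤ T) (hxT : x ≠ T) :
    (Set.Ioo a b = {x} → nullity ↥({x}ᶜ : Set α) = nullity α) ∧
      (Set.Ioo a b ≠ {x} → nullity ↥({x}ᶜ : Set α) = nullity α - 1) := by
  classical
  have hax : a ≠ x := ha.ne
  have hbx : b ≠ x := hb.ne'
  have hab : a ≠ b := (ha.trans hb).ne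
  have hNE : Nonempty α := ⟨x⟩
  have hcardα : 1 ≤ Nat.card α := Nat.one_le_iff_ne_zero.2 (by
    simp [Nat.card_eq_fintype_card, Fintype.card_ne_zero])
  have hcard : (Nat.card ↥({x}ᶜ : Set α) : ℤ) = (Nat.card α : ℤ) - 1 := by
    rw [Nat.card_coe_set_eq]
    have hx1 : ({x}ᶜ : Set α).ncard = Nat.card α - 1 := by
      rw [← Set.ncard_univ α, ← Set.ncard_diff_singleton_of_mem (Set.mem_univ x)]
      congr 1
      ext w; simp
    rw [hx1]
    omega
  have hccα : Nat.card (coverGraph α).ConnectedComponent = 1 := card_cc_eq_one T hT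
  have hccs : Nat.card (coverGraph ↥({x}ᶜ : Set α)).ConnectedComponent = 1 := by
    refine card_cc_eq_one (⟨T, by simpa using (Ne.symm hxT)⟩ : ({x}ᶜ : Set α)) ?_
    intro y
    exact Subtype.coe_le_coe.1 (hT y)
  set E := (coverGraph α).edgeSet with hE
  set E0 : Set (Sym2 α) := {e ∈ E | x ∉ e} with hE0
  have hinc : {e ∈ E | x ∈ e} = {s(a, x), s(x, b)} := by
    ext e
    induction e with
    | _ u v =>
      simp only [Set.mem_setOf_eq, Set.mem_insert_iff, Set.mem_singleton_iff, hE,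
        SimpleGraph.mem_edgeSet]
      constructor
      · rintro ⟨hadj, hxe⟩
        rw [Sym2.mem_iff] at hxe
        rcases hxe with rfl | rfl
        · rcases hadj with hc | hc
          · right; rw [(covBy_source_iff hb hbmin _).1 hc]
          · left; rw [(covBy_target_iff ha hamax _).1 hc, Sym2.eq_swap]
        · rcases hadj with hc | hc
          · left; rw [(covBy_target_iff ha hamax _).1 hc]
          · right; rw [(covBy_source_iff hb hbmin _).1 hc, Sym2.eq_swap]
      · intro h
        rcases h with h | h <;> rw [Sym2.eq_iff] at h <;>
          rcases h with ⟨rfl, rfl⟩ | ⟨rfl, rfl⟩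
        · exact ⟨Or.inl ((covBy_target_iff ha hamax _).2 rfl), by simp⟩
        · exact ⟨Or.inr ((covBy_target_iff ha hamax _).2 rfl), by simp⟩
        · exact ⟨Or.inl ((covBy_source_iff hb hbmin _).2 rfl), by simp⟩
        · exact ⟨Or.inr ((covBy_source_iff hb hbmin _).2 rfl), by simp⟩
  have hsplitE : E = E0 ∪ {s(a, x), s(x, b)} := by
    rw [← hinc, hE0]
    ext e
    by_cases hxe : x ∈ e <;> simp [hxe]
  have hdisjE : Disjoint E0 {s(a, x), s(x, b)} := by
    rw [Set.disjoint_left]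
    rintro e ⟨-, hxe⟩ he
    rcases he with rfl | rfl
    · exact hxe (by simp)
    · exact hxe (by simp)
  have hpairne : s(a, x) ≠ s(x, b) := by
    intro h
    rw [Sym2.eq_iff] at h
    rcases h with ⟨h1, -⟩ | ⟨h1, -⟩
    · exact hax h1
    · exact hab h1
  have hEcount : E.ncard = E0.ncard + 2 := by
    rw [hsplitE, Set.ncard_union_eq hdisjE (Set.toFinite _) (Set.toFinite _),
      Set.ncard_pair hpairne]
  set E' := (coverGraph ↥({x}ᶜ : Set α)).edgeSet with hE'
  have himg : (Sym2.map (Subtype.val : ({x}ᶜ : Set α) → α)) '' E'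
      = E0 ∪ (if Set.Ioo a b = {x} then {s(a, b)} else ∅) := by
    ext e
    constructor
    · rintro ⟨e', he', rfl⟩
      induction e' with
      | _ u v =>
        rw [hE', SimpleGraph.mem_edgeSet] at he'
        have hcov : (u ⋖ v) ∨ (v ⋖ u) := he'
        rcases hcov with hc | hc <;>
          rw [subtype_covBy_iff ha hb hamax hbmin] at hc <;>
          rcases hc with hc | ⟨h1, h2, h3⟩
        · refine Or.inl ⟨?_, ?_⟩
          · rw [Sym2.map_pair_eq, hE, SimpleGraph.mem_edgeSet]
            exact Or.inl hc
          · simp only [Sym2.map_pair_eq, Sym2.mem_iff]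
            rintro (h | h)
            · exact u.2 h.symm
            · exact v.2 h.symm
        · right
          rw [if_pos h3]
          simp [Sym2.map_pair_eq, h1, h2]
        · refine Or.inl ⟨?_, ?_⟩
          · rw [Sym2.map_pair_eq, hE, SimpleGraph.mem_edgeSet]
            exact Or.inr hc
          · simp only [Sym2.map_pair_eq, Sym2.mem_iff]
            rintro (h | h)
            · exact u.2 h.symm
            · exact v.2 h.symm
        · right
          rw [if_pos h3]
          simp [Sym2.map_pair_eq, h1, h2, Sym2.eq_swap]
    · intro he
      rcases (Set.mem_union _ _ _).1 he with ⟨heE, hxe⟩ | hsab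
      · induction e with
        | _ u v =>
          have hux : u ≠ x := fun h => hxe (h ▸ by simp)
          have hvx : v ≠ x := fun h => hxe (h ▸ by simp)
          have hux' : u ∈ ({x}ᶜ : Set α) := by simpa using hux
          have hvx' : v ∈ ({x}ᶜ : Set α) := by simpa using hvx
          refine ⟨s(⟨u, hux'⟩, ⟨v, hvx'⟩), ?_, by simp⟩
          rw [hE', SimpleGraph.mem_edgeSet]
          rw [hE, SimpleGraph.mem_edgeSet] at heE
          rcases heE with hc | hc
          · exact Or.inl ((subtype_covBy_iff ha hb hamax hbmin _ _).2 (Or.inl hc))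
          · exact Or.inr ((subtype_covBy_iff ha hb hamax hbmin _ _).2 (Or.inl hc))
      · by_cases hIoo : Set.Ioo a b = {x}
        · rw [if_pos hIoo] at hsab
          rw [Set.mem_singleton_iff] at hsab
          subst hsab
          have hax' : a ∈ ({x}ᶜ : Set α) := by simpa using hax
          have hbx' : b ∈ ({x}ᶜ : Set α) := by simpa using hbx
          refine ⟨s(⟨a, hax'⟩, ⟨b, hbx'⟩), ?_, by simp⟩
          rw [hE', SimpleGraph.mem_edgeSet]
          exact Or.inl ((subtype_covBy_iff ha hb hamax hbmin _ _).2 (Or.inr ⟨rfl, rfl, hIoo⟩))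
        · rw [if_neg hIoo] at hsab
          exact absurd hsab (Set.notMem_empty _)
  have hsabE0 : Set.Ioo a b = {x} → s(a, b) ∉ E0 := by
    intro hIoo
    rintro ⟨heE, -⟩
    rw [hE, SimpleGraph.mem_edgeSet] at heE
    rcases heE with hc | hc
    · exact hc.2 ha hb
    · exact absurd (ha.trans hb) (not_lt_of_gt hc.1)
  have hE'count : E'.ncard = E0.ncard + (if Set.Ioo a b = {x} then 1 else 0) := by
    have hinj : Function.Injective (Sym2.map (Subtype.val : ({x}ᶜ : Set α) → α)) :=
      Sym2.map.injective Subtype.coe_injective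
    rw [← Set.ncard_image_of_injective E' hinj, himg]
    by_cases hIoo : Set.Ioo a b = {x}
    · rw [if_pos hIoo, if_pos hIoo,
        Set.ncard_union_eq (Set.disjoint_singleton_right.2 (hsabE0 hIoo)) (Set.toFinite _)
          (Set.toFinite _), Set.ncard_singleton]
    · rw [if_neg hIoo, if_neg hIoo, Set.union_empty, Nat.add_zero]
  have hmain : ∀ (d : ℤ), ((Set.Ioo a b = {x} → d = 1) → (Set.Ioo a b ≠ {x} → d = 0) →
      (E'.ncard : ℤ) = (E0.ncard : ℤ) + d → True)  := fun _ _ _ _ => trivial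
  clear hmain
  constructor
  · intro hIoo
    unfold nullity
    rw [hccα, hccs, hcard, Nat.card_coe_set_eq, Nat.card_coe_set_eq,
      ← hE, ← hE', hEcount, hE'count, if_pos hIoo]
    push_cast
    ring
  · intro hIoo
    unfold nullity
    rw [hccα, hccs, hcard, Nat.card_coe_set_eq, Nat.card_coe_set_eq,
      ← hE, ← hE', hEcount, hE'count, if_neg hIoo]
    push_cast
    ring

end Local

section CoreSec
variable {α : Type*} [Lattice α] [Fintype α]

structure Core (α : Type*) [Lattice α] [Fintype α] (A B : α → α) : Prop where
  redChain : IsChain (· ≤ ·) (RedSet α)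
  redNe : (RedSet α).Nonempty
  Alt : ∀ x ∈ IrrSet α, A x < x
  Bgt : ∀ x ∈ IrrSet α, x < B x
  Ared : ∀ x ∈ IrrSet α, A x ∈ RedSet α
  Bred : ∀ x ∈ IrrSet α, B x ∈ RedSet α
  Amax : ∀ x ∈ IrrSet α, ∀ w, w < x → w ≤ A x
  Bmin : ∀ x ∈ IrrSet α, ∀ w, x < w → B x ≤ w

/-- The "gaps": consecutive pairs of reducible elements with something in between. -/
def Gaps (α : Type*) [Lattice α] [Fintype α] : Set (α × α) :=
  {p | p ∈ consPairs (RedSet α) ∧ (Set.Ioo p.1 p.2).Nonempty}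

lemma irr_eq_compl (α : Type*) [Lattice α] : IrrSet α = (RedSet α)ᶜ := rfl

lemma mem_irr_or_red (x : α) : x ∈ IrrSet α ∨ x ∈ RedSet α := by
  by_cases h : Reducible x
  · exact Or.inr h
  · exact Or.inl h

namespace Core
variable {A B : α → α} (hC : Core α A B)

include hC

lemma covBy_iff {y z : α} : y ⋖ z ↔
    ((y ∈ RedSet α ∧ z ∈ RedSet α ∧ y < z ∧ Set.Ioo y z = ∅) ∨
     (z ∈ IrrSet α ∧ y = A z) ∨ (y ∈ IrrSet α ∧ z = B y)) := by
  constructor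
  · intro h
    rcases mem_irr_or_red z with hz | hz
    · exact Or.inr (Or.inl ⟨hz, (covBy_target_iff (hC.Alt z hz) (hC.Amax z hz) y).1 h⟩)
    · rcases mem_irr_or_red y with hy | hy
      · exact Or.inr (Or.inr ⟨hy, (covBy_source_iff (hC.Bgt y hy) (hC.Bmin y hy) z).1 h⟩)
      · exact Or.inl ⟨hy, hz, h.1, ((covBy_iff_Ioo_eq).1 h).2⟩
  · rintro (⟨-, -, h1, h2⟩ | ⟨hz, rfl⟩ | ⟨hy, rfl⟩)
    · exact covBy_iff_Ioo_eq.2 ⟨h1, h2⟩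
    · exact (covBy_target_iff (hC.Alt z hz) (hC.Amax z hz) _).2 rfl
    · exact (covBy_source_iff (hC.Bgt y hy) (hC.Bmin y hy) _).2 rfl

/-- Every element of a gap interval is irreducible with that gap as its pair. -/
lemma gap_mem {p : α × α} (hp : p ∈ Gaps α) :
    ∀ w ∈ Set.Ioo p.1 p.2, w ∈ IrrSet α ∧ A w = p.1 ∧ B w = p.2 := by
  obtain ⟨⟨hp1, hp2, hplt, hpcons⟩, hne⟩ := hp
  intro w hw
  have hwirr : w ∈ IrrSet α := by
    rcases mem_irr_or_red w with h | h
    · exact h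
    · exact absurd ⟨w, h, hw.1, hw.2⟩ hpcons
  refine ⟨hwirr, ?_, ?_⟩
  · -- A w = p.1
    have h1 : p.1 ≤ A w := hC.Amax w hwirr p.1 hw.1
    have h2 : A w < p.2 := (hC.Alt w hwirr).trans hw.2
    have h3 : A w ∈ RedSet α := hC.Ared w hwirr
    by_contra hne'
    exact hpcons ⟨A w, h3, lt_of_le_of_ne h1 (fun h => hne' h.symm), h2⟩
  · have h1 : B w ≤ p.2 := hC.Bmin w hwirr p.2 hw.2
    have h2 : p.1 < B w := hw.1.trans (hC.Bgt w hwirr)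
    have h3 : B w ∈ RedSet α := hC.Bred w hwirr
    by_contra hne'
    exact hpcons ⟨B w, h3, h2, lt_of_le_of_ne h1 hne'⟩

/-- If the interval of an irreducible element contains only irreducibles,
then its pair is a gap. -/
lemma pair_mem_gaps {x : α} (hx : x ∈ IrrSet α) (hIoo : Set.Ioo (A x) (B x) ⊆ IrrSet α) :
    (A x, B x) ∈ Gaps α := by
  refine ⟨⟨hC.Ared x hx, hC.Bred x hx, (hC.Alt x hx).trans (hC.Bgt x hx), ?_⟩,
    ⟨x, hC.Alt x hx, hC.Bgt x hx⟩⟩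
  rintro ⟨r, hr, h1, h2⟩
  exact hIoo ⟨h1, h2⟩ hr

/-- Distinct gaps have separated intervals. -/
lemma gaps_separated {p q : α × α} (hp : p ∈ Gaps α) (hq : q ∈ Gaps α) (hne : p ≠ q) :
    p.2 ≤ q.1 ∨ q.2 ≤ p.1 := by
  obtain ⟨⟨hp1, hp2, hplt, hpcons⟩, -⟩ := hp
  obtain ⟨⟨hq1, hq2, hqlt, hqcons⟩, -⟩ := hq
  by_contra h
  push_neg at h
  obtain ⟨h1, h2⟩ := h
  -- ¬(p.2 ≤ q.1) and ¬(q.2 ≤ p.1)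
  have hq1p2 : q.1 < p.2 := by
    rcases hC.redChain.total hq1 hp2 with h' | h'
    · exact lt_of_le_of_ne h' (fun he => h1 he.ge)
    · exact absurd h' h1
  have hp1q2 : p.1 < q.2 := by
    rcases hC.redChain.total hp1 hq2 with h' | h'
    · exact lt_of_le_of_ne h' (fun he => h2 he.ge)
    · exact absurd h' h2
  -- compare p.1 q.1
  rcases hC.redChain.total hp1 hq1 with hpq | hqp
  · rcases lt_or_eq_of_le hpq with hlt | heq
    · -- p.1 < q.1 < p.2 : q.1 reducible inside p's gap
      exact hpcons ⟨q.1, hq1, hlt, hq1p2⟩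
    · -- p.1 = q.1 ; compare p.2 q.2
      rcases hC.redChain.total hp2 hq2 with h' | h'
      · rcases lt_or_eq_of_le h' with hlt | heq2
        · exact hqcons ⟨p.2, hp2, heq ▸ hplt, hlt⟩
        · exact hne (Prod.ext heq heq2)
      · rcases lt_or_eq_of_le h' with hlt | heq2
        · exact hpcons ⟨q.2, hq2, heq.symm ▸ hqlt, hlt⟩
        · exact hne (Prod.ext heq heq2.symm)
  · rcases lt_or_eq_of_le hqp with hlt | heq
    · exact hqcons ⟨p.1, hp1, hlt, hp1q2⟩
    · rcases hC.redChain.total hp2 hq2 with h' | h'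
      · rcases lt_or_eq_of_le h' with hlt | heq2
        · exact hqcons ⟨p.2, hp2, heq.symm ▸ hplt, hlt⟩
        · exact hne (Prod.ext heq.symm heq2)
      · rcases lt_or_eq_of_le h' with hlt | heq2
        · exact hpcons ⟨q.2, hq2, heq ▸ hqlt, hlt⟩
        · exact hne (Prod.ext heq.symm heq2.symm)

lemma gaps_disjoint {p q : α × α} (hp : p ∈ Gaps α) (hq : q ∈ Gaps α) (hne : p ≠ q) :
    Disjoint (Set.Ioo p.1 p.2) (Set.Ioo q.1 q.2) := by
  rw [Set.disjoint_left]
  rintro w ⟨h1, h2⟩ ⟨h3, h4⟩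
  rcases hC.gaps_separated hp hq hne with h | h
  · exact absurd (h2.trans_le h) (not_lt_of_gt h3)
  · exact absurd (h4.trans_le h) (not_lt_of_gt h1)

/-- Edge count. -/
lemma edge_count :
    Nat.card (coverGraph α).edgeSet + (Gaps α).ncard + 1
      = (RedSet α).ncard + 2 * (IrrSet α).ncard := by
  classical
  set CE : Set (α × α) := consPairs (RedSet α) ∩ {p | Set.Ioo p.1 p.2 = ∅} with hCE
  have hsplit : consPairs (RedSet α) = CE ∪ Gaps α := by
    ext p
    by_cases h : (Set.Ioo p.1 p.2).Nonempty
    · simp [hCE, Gaps, h, Set.nonempty_iff_ne_empty.1 h]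
    · rw [Set.not_nonempty_iff_eq_empty] at h
      simp [hCE, Gaps, h]
  have hdisj0 : Disjoint CE (Gaps α) := by
    rw [Set.disjoint_left]
    rintro p ⟨-, hemp⟩ ⟨-, hne⟩
    rw [Set.mem_setOf_eq] at hemp
    exact Set.not_nonempty_empty (hemp ▸ hne)
  have hcount0 : CE.ncard + (Gaps α).ncard + 1 = (RedSet α).ncard := by
    rw [← Set.ncard_union_eq hdisj0 (Set.toFinite _) (Set.toFinite _), ← hsplit]
    exact consPairs_ncard hC.redChain hC.redNe
  -- the three edge families
  set eC : Set (Sym2 α) := (fun p : α × α => s(p.1, p.2)) '' CE with heC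
  set eA : Set (Sym2 α) := (fun x => s(A x, x)) '' IrrSet α with heA
  set eB : Set (Sym2 α) := (fun x => s(x, B x)) '' IrrSet α with heB
  have hedge : (coverGraph α).edgeSet = eC ∪ eA ∪ eB := by
    ext e
    induction e with
    | _ u v =>
      rw [SimpleGraph.mem_edgeSet]
      constructor
      · intro hadj
        have : u ⋖ v ∨ v ⋖ u := hadj
        rcases this with hc | hc <;> rw [hC.covBy_iff] at hc
        · rcases hc with ⟨h1, h2, h3, h4⟩ | ⟨h1, h2⟩ | ⟨h1, h2⟩
          · refine Or.inl (Or.inl ⟨(u, v), ?_, rfl⟩)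
            exact ⟨⟨h1, h2, h3, fun ⟨r, hr, hr1, hr2⟩ => (Set.eq_empty_iff_forall_notMem.1 h4 r) ⟨hr1, hr2⟩⟩, h4⟩
          · exact Or.inl (Or.inr ⟨v, h1, by rw [h2]⟩)
          · exact Or.inr ⟨u, h1, by rw [h2]⟩
        · rcases hc with ⟨h1, h2, h3, h4⟩ | ⟨h1, h2⟩ | ⟨h1, h2⟩
          · refine Or.inl (Or.inl ⟨(v, u), ?_, Sym2.eq_swap⟩)
            exact ⟨⟨h1, h2, h3, fun ⟨r, hr, hr1, hr2⟩ => (Set.eq_empty_iff_forall_notMem.1 h4 r) ⟨hr1, hr2⟩⟩, h4⟩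
          · exact Or.inl (Or.inr ⟨u, h1, by rw [h2, Sym2.eq_swap]⟩)
          · exact Or.inr ⟨v, h1, by rw [h2, Sym2.eq_swap]⟩
      · intro he
        rcases he with (⟨p, hp, hpe⟩ | ⟨w, hw, hwe⟩) | ⟨w, hw, hwe⟩
        · obtain ⟨⟨h1, h2, h3, -⟩, h4⟩ := hp
          rw [Sym2.eq_iff] at hpe
          rcases hpe with ⟨hu, hv⟩ | ⟨hu, hv⟩
          · subst hu; subst hv
            exact Or.inl (hC.covBy_iff.2 (Or.inl ⟨h1, h2, h3, h4⟩))
          · subst hu; subst hv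
            exact Or.inr (hC.covBy_iff.2 (Or.inl ⟨h1, h2, h3, h4⟩))
        · rw [Sym2.eq_iff] at hwe
          rcases hwe with ⟨hu, hv⟩ | ⟨hu, hv⟩
          · subst hu; subst hv
            exact Or.inl (hC.covBy_iff.2 (Or.inr (Or.inl ⟨hw, rfl⟩)))
          · subst hu; subst hv
            exact Or.inr (hC.covBy_iff.2 (Or.inr (Or.inl ⟨hw, rfl⟩)))
        · rw [Sym2.eq_iff] at hwe
          rcases hwe with ⟨hu, hv⟩ | ⟨hu, hv⟩
          · subst hu; subst hv
            exact Or.inl (hC.covBy_iff.2 (Or.inr (Or.inr ⟨hw, rfl⟩)))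
          · subst hu; subst hv
            exact Or.inr (hC.covBy_iff.2 (Or.inr (Or.inr ⟨hw, rfl⟩)))
  -- cardinalities
  have hCEcard : eC.ncard = CE.ncard := by
    rw [heC]
    apply Set.ncard_image_of_injOn
    rintro ⟨u, v⟩ ⟨⟨-, -, huv, -⟩, -⟩ ⟨u', v'⟩ ⟨⟨-, -, huv', -⟩, -⟩ h
    simp only [Sym2.eq_iff] at h
    rcases h with ⟨h1, h2⟩ | ⟨h1, h2⟩
    · simp [h1, h2]
    · subst h1; subst h2
      exact absurd (huv.trans huv') (lt_irrefl _)
  have hAcard : eA.ncard = (IrrSet α).ncard := by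
    rw [heA]
    apply Set.ncard_image_of_injOn
    intro u hu u' hu' h
    simp only [Sym2.eq_iff] at h
    rcases h with ⟨-, h2⟩ | ⟨h1, h2⟩
    · exact h2
    · have := hC.Ared u' hu'
      rw [← h2] at this
      exact absurd this hu
  have hBcard : eB.ncard = (IrrSet α).ncard := by
    rw [heB]
    apply Set.ncard_image_of_injOn
    intro u hu u' hu' h
    simp only [Sym2.eq_iff] at h
    rcases h with ⟨h1, -⟩ | ⟨h1, h2⟩
    · exact h1
    · have := hC.Bred u' hu'
      rw [← h1] at this
      exact absurd this hu
  have hdAB : Disjoint eA eB := by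
    rw [Set.disjoint_left]
    rintro e ⟨u, hu, rfl⟩ ⟨w, hw, hwe⟩
    rw [Sym2.eq_iff] at hwe
    rcases hwe with ⟨h1, h2⟩ | ⟨h1, h2⟩
    · have := hC.Bred w hw
      rw [h2] at this
      exact absurd this hu
    · have h3 := hC.Bgt w hw
      rw [h2] at h3
      rw [h1] at h3
      exact absurd (hC.Alt u hu) (not_lt_of_gt h3)
  have hdCA : Disjoint eC eA := by
    rw [Set.disjoint_left]
    rintro e ⟨p, ⟨⟨h1, h2, -, -⟩, -⟩, rfl⟩ ⟨w, hw, hwe⟩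
    rw [Sym2.eq_iff] at hwe
    rcases hwe with ⟨-, hp2⟩ | ⟨-, hp1⟩
    · rw [← hp2] at h2; exact absurd h2 hw
    · rw [← hp1] at h1; exact absurd h1 hw
  have hdCB : Disjoint eC eB := by
    rw [Set.disjoint_left]
    rintro e ⟨p, ⟨⟨h1, h2, -, -⟩, -⟩, rfl⟩ ⟨w, hw, hwe⟩
    rw [Sym2.eq_iff] at hwe
    rcases hwe with ⟨hp1, -⟩ | ⟨hp2, -⟩
    · rw [← hp1] at h1; exact absurd h1 hw
    · rw [← hp2] at h2; exact absurd h2 hw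
  have hcount : Nat.card (coverGraph α).edgeSet
      = CE.ncard + ((IrrSet α).ncard + (IrrSet α).ncard) := by
    rw [Nat.card_coe_set_eq, hedge, Set.union_assoc,
      Set.ncard_union_eq (by exact Set.disjoint_union_right.2 ⟨hdCA, hdCB⟩) (Set.toFinite _) (Set.toFinite _),
      Set.ncard_union_eq hdAB (Set.toFinite _) (Set.toFinite _), hCEcard, hAcard, hBcard]
  rw [hcount]
  omega

lemma nullity_eq : nullity α = ((IrrSet α).ncard : ℤ) - ((Gaps α).ncard : ℤ) := by
  classical
  have hNE : Nonempty α := ⟨hC.redNe.choose⟩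
  obtain ⟨T, hT⟩ := exists_top α
  have hcc := card_cc_eq_one T hT
  have hcardsplit : Nat.card α = (RedSet α).ncard + (IrrSet α).ncard := by
    have h := Set.ncard_add_ncard_compl (RedSet α)
    rw [irr_eq_compl]
    omega
  have hedge := hC.edge_count
  unfold nullity
  rw [hcc, hcardsplit]
  omega

end Core
end CoreSec


section Adjunct
variable {α : Type*} [Lattice α]

/-- The union of the adjoined chains of a list. -/
def pts (l : List (Set α × α × α)) : Set α := {y | ∃ t ∈ l, y ∈ t.1}

lemma pts_nil : pts ([] : List (Set α × α × α)) = ∅ := by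
  ext y; simp [pts]

lemma pts_append (l₁ l₂ : List (Set α × α × α)) : pts (l₁ ++ l₂) = pts l₁ ∪ pts l₂ := by
  ext y
  simp only [pts, Set.mem_setOf_eq, List.mem_append, Set.mem_union]
  constructor
  · rintro ⟨t, (h | h), ht⟩
    · exact Or.inl ⟨t, h, ht⟩
    · exact Or.inr ⟨t, h, ht⟩
  · rintro (⟨t, h, ht⟩ | ⟨t, h, ht⟩)
    · exact ⟨t, Or.inl h, ht⟩
    · exact ⟨t, Or.inr h, ht⟩

lemma pts_singleton (t : Set α × α × α) : pts [t] = t.1 := by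
  ext y; simp [pts]

lemma pts_cons (t : Set α × α × α) (l : List (Set α × α × α)) :
    pts (t :: l) = t.1 ∪ pts l := by
  ext y
  simp only [pts, Set.mem_setOf_eq, List.mem_cons, Set.mem_union]
  constructor
  · rintro ⟨t', (rfl | h), ht⟩
    · exact Or.inl ht
    · exact Or.inr ⟨t', h, ht⟩
  · rintro (h | ⟨t', h, ht⟩)
    · exact ⟨t, Or.inl rfl, h⟩
    · exact ⟨t', Or.inr h, ht⟩

/-- The structural invariant carried by an adjunct representation whose adjunct
pairs all lie in `C₀`. -/
theorem adjunct_inv {C₀ s : Set α} {l : List (Set α × α × α)}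
    (hrep : AdjunctRep C₀ s l) (hp : ∀ t ∈ l, t.2.1 ∈ C₀ ∧ t.2.2 ∈ C₀) :
    IsChain (· ≤ ·) C₀ ∧ C₀.Nonempty ∧ s = C₀ ∪ pts l ∧
    (∀ t ∈ l, t.1.Nonempty ∧ Disjoint C₀ t.1 ∧ t.2.1 < t.2.2) ∧
    List.Pairwise (fun t t' => Disjoint t.1 t'.1) l ∧
    (∀ t ∈ l, ∀ x ∈ t.1, ∀ w ∈ s, w ∉ t.1 →
      ((w ≤ x ↔ w ≤ t.2.1) ∧ (x ≤ w ↔ t.2.2 ≤ w))) ∧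
    (∀ l₁ t l₂, l = l₁ ++ t :: l₂ → ∃ z, (z ∈ C₀ ∪ pts l₁) ∧ t.2.1 < z ∧ z < t.2.2) := by
  induction hrep with
  | base hchain hne =>
    refine ⟨hchain, hne, by rw [pts_nil, Set.union_empty], by simp, by simp, by simp, ?_⟩
    intro l₁ t l₂ h
    exact absurd h (by simp)
  | @step s l c a b hs hc hcne hdisj ha hb hab hnotcov hord ih =>
    have hpl : ∀ t ∈ l, t.2.1 ∈ C₀ ∧ t.2.2 ∈ C₀ :=
      fun t ht => hp t (List.mem_append_left _ ht)
    obtain ⟨hch, hne, hsEq, hprops, hpw, hordInv, hsplits⟩ := ih hpl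
    have hC₀s : C₀ ⊆ s := by rw [hsEq]; exact Set.subset_union_left
    have hpnew := hp (c, a, b) (List.mem_append_right _ (by simp))
    have haC : a ∈ C₀ := hpnew.1
    have hbC : b ∈ C₀ := hpnew.2
    have hptsl : pts l ⊆ s := by rw [hsEq]; exact Set.subset_union_right
    refine ⟨hch, hne, ?_, ?_, ?_, ?_, ?_⟩
    · rw [pts_append, pts_singleton, hsEq, Set.union_assoc]
    · intro t ht
      rcases List.mem_append.1 ht with h | h
      · exact hprops t h
      · rw [List.mem_singleton] at h
        subst h
        exact ⟨hcne, (Set.disjoint_of_subset_left hC₀s hdisj), hab⟩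
    · rw [List.pairwise_append]
      refine ⟨hpw, by simp, ?_⟩
      intro t ht t' ht'
      rw [List.mem_singleton] at ht'
      subst ht'
      refine Set.disjoint_of_subset_left ?_ hdisj
      intro y hy
      exact hptsl ⟨t, ht, hy⟩
    · intro t ht x hx w hw hwt
      rcases List.mem_append.1 ht with h | h
      · -- old chain
        have hxs : x ∈ s := hptsl ⟨t, h, hx⟩
        rcases hw with hws | hwc
        · exact hordInv t h x hx w hws hwt
        · -- w in the new chain c
          have h1 := hord x hxs w hwc
          have ha1 : t.2.1 ∈ s := hC₀s (hpl t h).1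
          have hb1 : t.2.2 ∈ s := hC₀s (hpl t h).2
          have hant : t.2.1 ∉ t.1 := by
            have := (hprops t h).2.1
            rw [Set.disjoint_left] at this
            exact this (hpl t h).1
          have hbnt : t.2.2 ∉ t.1 := by
            have := (hprops t h).2.1
            rw [Set.disjoint_left] at this
            exact this (hpl t h).2
          have has : a ∈ s := hC₀s haC
          have hbs : b ∈ s := hC₀s hbC
          have hanott : a ∉ t.1 := by
            have := (hprops t h).2.1
            rw [Set.disjoint_left] at this
            exact this haC
          have hbnott : b ∉ t.1 := by
            have := (hprops t h).2.1
            rw [Set.disjoint_left] at this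
            exact this hbC
          have iha := hordInv t h x hx a has hanott
          have ihb := hordInv t h x hx b hbs hbnott
          have h2 := hord t.2.1 ha1 w hwc
          have h3 := hord t.2.2 hb1 w hwc
          constructor
          · -- w ≤ x ↔ w ≤ t.2.1
            rw [h1.2, ihb.1, ← h2.2]
          · -- x ≤ w ↔ t.2.2 ≤ w
            rw [h1.1, iha.2, ← h3.1]
      · -- new chain
        rw [List.mem_singleton] at h
        subst h
        have hws : w ∈ s := by
          rcases hw with h | h
          · exact h
          · exact absurd h hwt
        exact ⟨(hord w hws x hx).1, (hord w hws x hx).2⟩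
    · intro l₁ t l₂ hsplit
      rcases List.eq_nil_or_concat l₂ with rfl | ⟨l₂', t', rfl⟩
      · -- t is the new element
        have h1 : l = l₁ ∧ [(c, a, b)] = [t] := by
          apply List.append_inj' hsplit rfl
        obtain ⟨rfl, h2⟩ := h1
        have h3 : t = (c, a, b) := by
          simpa using h2.symm
        subst h3
        obtain ⟨z, hz, hz1, hz2⟩ := hnotcov
        rw [hsEq] at hz
        exact ⟨z, hz, hz1, hz2⟩
      · -- t is in the old list
        have h1 : l ++ [(c, a, b)] = (l₁ ++ t :: l₂') ++ [t'] := by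
          rw [hsplit]; simp
        have h2 : l = l₁ ++ t :: l₂' ∧ [(c, a, b)] = [t'] := by
          apply List.append_inj' h1 rfl
        exact hsplits l₁ t l₂' h2.1



end Adjunct

section Main
variable {α : Type*} [Lattice α] [Fintype α]

lemma pts_ncard [Fintype α] : ∀ (l : List (Set α × α × α)),
    List.Pairwise (fun t t' => Disjoint t.1 t'.1) l → (∀ t ∈ l, t.1.ncard = 1) →
    (pts l).ncard = l.length := by
  intro l
  induction l with
  | nil => intro _ _; rw [pts_nil]; simp
  | cons t l ih =>
    intro hpw hone
    rw [List.pairwise_cons] at hpw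
    have hdisj : Disjoint t.1 (pts l) := by
      rw [Set.disjoint_left]
      rintro y hy ⟨t', ht', hyt'⟩
      have := hpw.1 t' ht'
      rw [Set.disjoint_left] at this
      exact this hy hyt'
    rw [pts_cons, Set.ncard_union_eq hdisj (Set.toFinite _) (Set.toFinite _),
      ih hpw.2 (fun t' ht' => hone t' (List.mem_cons_of_mem _ ht')),
      hone t List.mem_cons_self]
    simp [Nat.add_comm]

/-- The backward direction of the main theorem. -/
lemma backward [Fintype α] [Nonempty α] (k m : ℕ) (C₀ : Set α) (l : List (Set α × α × α))
    (hrep : AdjunctRep C₀ Set.univ l) (hlen : l.length = k)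
    (hpairs : ∀ t ∈ l, t.2.1 ∈ C₀ ∧ t.2.2 ∈ C₀)
    (hone : ∀ t ∈ l, t.1.ncard = 1)
    (hm : m = {p : α × α | (∃ t ∈ l, t.2 = p) ∧ Set.Ioo p.1 p.2 ⊆ IrrSet α}.ncard)
    (hC₀m : C₀.ncard = (RedSet α).ncard + m) :
    IsBasicBlock α ∧ nullity α = (k : ℤ) := by
  classical
  obtain ⟨hch, hC₀ne, hsEq, hprops, hpw, hordInv, hsplits⟩ := adjunct_inv hrep hpairs
  have hmemall : ∀ w : α, w ∈ C₀ ∨ w ∈ pts l := by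
    intro w
    have : w ∈ C₀ ∪ pts l := hsEq ▸ Set.mem_univ w
    exact this
  have hsingle : ∀ t ∈ l, ∃ x, t.1 = {x} := fun t ht => Set.ncard_eq_one.1 (hone t ht)
  have hdisjC : ∀ t ∈ l, Disjoint C₀ t.1 := fun t ht => (hprops t ht).2.1
  have hord1 : ∀ t ∈ l, ∀ x ∈ t.1, ∀ w, w ≠ x →
      ((w ≤ x ↔ w ≤ t.2.1) ∧ (x ≤ w ↔ t.2.2 ≤ w)) := by
    intro t ht x hx w hw
    obtain ⟨x0, hx0⟩ := hsingle t ht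
    have hxx0 : x = x0 := by rw [hx0] at hx; exact hx
    refine hordInv t ht x hx w (Set.mem_univ w) ?_
    rw [hx0, Set.mem_singleton_iff, ← hxx0]
    exact hw
  have hnC : ∀ t ∈ l, ∀ x ∈ t.1, ∀ w ∈ C₀, w ≠ x := by
    intro t ht x hx w hw
    rintro rfl
    have := hdisjC t ht
    rw [Set.disjoint_left] at this
    exact this hw hx
  have hlt : ∀ t ∈ l, ∀ x ∈ t.1, t.2.1 < x ∧ x < t.2.2 := by
    intro t ht x hx
    have hane := hnC t ht x hx t.2.1 (hpairs t ht).1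
    have hbne := hnC t ht x hx t.2.2 (hpairs t ht).2
    have h1 := (hord1 t ht x hx t.2.1 hane).1
    have h2 := (hord1 t ht x hx t.2.2 hbne).2
    exact ⟨lt_of_le_of_ne (h1.2 le_rfl) hane, lt_of_le_of_ne (h2.2 le_rfl) (Ne.symm hbne)⟩
  have hXirr : ∀ t ∈ l, ∀ x ∈ t.1, x ∈ IrrSet α := by
    intro t ht x hx hred
    rcases hred with ⟨y, z, hy, hz, heq⟩ | ⟨y, z, hy, hz, heq⟩
    · have hyx : y < x := lt_of_le_of_ne (heq ▸ le_sup_left) hy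
      have hzx : z < x := lt_of_le_of_ne (heq ▸ le_sup_right) hz
      have h1 : y ≤ t.2.1 := (hord1 t ht x hx y hy).1.1 hyx.le
      have h2 : z ≤ t.2.1 := (hord1 t ht x hx z hz).1.1 hzx.le
      have : x ≤ t.2.1 := heq ▸ sup_le h1 h2
      exact absurd (hlt t ht x hx).1 (not_lt_of_ge this)
    · have hyx : x < y := lt_of_le_of_ne (heq ▸ inf_le_left) (Ne.symm hy)
      have hzx : x < z := lt_of_le_of_ne (heq ▸ inf_le_right) (Ne.symm hz)
      have h1 : t.2.2 ≤ y := (hord1 t ht x hx y hy).2.1 hyx.le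
      have h2 : t.2.2 ≤ z := (hord1 t ht x hx z hz).2.1 hzx.le
      have : t.2.2 ≤ x := heq ▸ le_inf h1 h2
      exact absurd (hlt t ht x hx).2 (not_lt_of_ge this)
  -- every adjunct pair has a witness in C₀ strictly between its endpoints
  have h7a : ∀ t ∈ l, ∃ z ∈ C₀, t.2.1 < z ∧ z < t.2.2 := by
    intro t ht
    suffices h : ∀ N : ℕ, ∀ l₁ (t' : Set α × α × α) l₂, l = l₁ ++ t' :: l₂ →
        l₁.length ≤ N → t.2.1 ≤ t'.2.1 → t'.2.2 ≤ t.2.2 →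
        ∃ z ∈ C₀, t.2.1 < z ∧ z < t.2.2 by
      obtain ⟨l₁, l₂, hsplit⟩ := List.append_of_mem ht
      exact h l₁.length l₁ t l₂ hsplit le_rfl le_rfl le_rfl
    intro N
    induction N with
    | zero =>
      intro l₁ t' l₂ hsplit hlen1 h1 h2
      have hl₁ : l₁ = [] := List.length_eq_zero_iff.1 (Nat.le_zero.1 hlen1)
      subst hl₁
      obtain ⟨z, hz, hz1, hz2⟩ := hsplits [] t' l₂ hsplit
      rw [pts_nil, Set.union_empty] at hz
      exact ⟨z, hz, lt_of_le_of_lt h1 hz1, lt_of_lt_of_le hz2 h2⟩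
    | succ N ih =>
      intro l₁ t' l₂ hsplit hlen1 h1 h2
      obtain ⟨z, hz, hz1, hz2⟩ := hsplits l₁ t' l₂ hsplit
      rcases hz with hz | hz
      · exact ⟨z, hz, lt_of_le_of_lt h1 hz1, lt_of_lt_of_le hz2 h2⟩
      · obtain ⟨t'', ht''1, hzt''⟩ := hz
        obtain ⟨l₁', l₂'', hsplit2⟩ := List.append_of_mem ht''1
        have ht''l : t'' ∈ l := by
          rw [hsplit]
          exact List.mem_append_left _ ht''1
        have hzlt := hlt t'' ht''l z hzt''
        -- t.2.1 ≤ t''.2.1 and t''.2.2 ≤ t.2.2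
        have hza : t.2.1 ≤ t''.2.1 := by
          have hne : t.2.1 ≠ z := hnC t'' ht''l z hzt'' t.2.1 (hpairs t ht).1
          exact (hord1 t'' ht''l z hzt'' t.2.1 hne).1.1
            (le_of_lt (lt_of_le_of_lt h1 hz1))
        have hzb : t''.2.2 ≤ t.2.2 := by
          have hne : t.2.2 ≠ z := hnC t'' ht''l z hzt'' t.2.2 (hpairs t ht).2
          exact (hord1 t'' ht''l z hzt'' t.2.2 hne).2.1
            (le_of_lt (lt_of_lt_of_le hz2 h2))
        have hsplit3 : l = l₁' ++ t'' :: (l₂'' ++ t' :: l₂) := by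
          rw [hsplit, hsplit2]
          simp
        have hlen2 : l₁'.length ≤ N := by
          have : l₁'.length < l₁.length := by
            rw [hsplit2]
            simp only [List.length_append, List.length_cons]
            omega
          omega
        exact ih l₁' t'' (l₂'' ++ t' :: l₂) hsplit3 hlen2 hza hzb
  -- the endpoints are reducible
  have hjr : ∀ t ∈ l, JoinReducible t.2.2 ∧ MeetReducible t.2.1 := by
    intro t ht
    obtain ⟨z, hzC, hz1, hz2⟩ := h7a t ht
    obtain ⟨x0, hx0⟩ := hsingle t ht
    have hx : x0 ∈ t.1 := by rw [hx0]; exact rfl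
    have hzx : z ≠ x0 := hnC t ht x0 hx z hzC
    have hltx := hlt t ht x0 hx
    have hzNotLe : ¬ z ≤ x0 := by
      intro h
      have := (hord1 t ht x0 hx z hzx).1.1 h
      exact absurd hz1 (not_lt_of_ge this)
    have hxNotLe : ¬ x0 ≤ z := by
      intro h
      have := (hord1 t ht x0 hx z hzx).2.1 h
      exact absurd hz2 (not_lt_of_ge this)
    constructor
    · refine ⟨x0, z, hltx.2.ne, hz2.ne, ?_⟩
      have hub : x0 ⊔ z ≤ t.2.2 := sup_le hltx.2.le hz2.le
      have hlb : t.2.2 ≤ x0 ⊔ z := by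
        have hne : x0 ⊔ z ≠ x0 := by
          intro h
          exact hzNotLe (h ▸ le_sup_right)
        exact (hord1 t ht x0 hx (x0 ⊔ z) hne).2.1 le_sup_left
      exact le_antisymm hub hlb
    · refine ⟨x0, z, (hlt t ht x0 hx).1.ne', hz1.ne', ?_⟩
      have hub : t.2.1 ≤ x0 ⊓ z := le_inf hltx.1.le hz1.le
      have hlb : x0 ⊓ z ≤ t.2.1 := by
        have hne : x0 ⊓ z ≠ x0 := by
          intro h
          exact hxNotLe (h ▸ inf_le_right)
        exact (hord1 t ht x0 hx (x0 ⊓ z) hne).1.1 inf_le_left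
      exact le_antisymm hlb hub
  -- the set of adjunct endpoints
  set AB : Set α := {y | ∃ t ∈ l, t.2.1 = y ∨ t.2.2 = y} with hABdef
  have hABC₀ : AB ⊆ C₀ := by
    rintro y ⟨t, ht, (rfl | rfl)⟩
    · exact (hpairs t ht).1
    · exact (hpairs t ht).2
  have hABred : AB ⊆ RedSet α := by
    rintro y ⟨t, ht, (rfl | rfl)⟩
    · exact Or.inr (hjr t ht).2
    · exact Or.inl (hjr t ht).1
  -- elements of C₀ outside AB are irreducible
  have hbelowC : ∀ c ∈ C₀, c ∉ AB → ∀ w, w < c → ∃ v ∈ C₀, w ≤ v ∧ v < c := by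
    intro c hc hcAB w hw
    rcases hmemall w with hwC | ⟨t, ht, hwt⟩
    · exact ⟨w, hwC, le_rfl, hw⟩
    · have hcw : c ≠ w := hnC t ht w hwt c hc
      have hbtc : t.2.2 ≤ c := (hord1 t ht w hwt c hcw).2.1 hw.le
      have hbtnec : t.2.2 ≠ c := by
        intro h
        exact hcAB ⟨t, ht, Or.inr h⟩
      have hwb : w ≤ t.2.2 := (hlt t ht w hwt).2.le
      exact ⟨t.2.2, hABC₀ ⟨t, ht, Or.inr rfl⟩, hwb, lt_of_le_of_ne hbtc hbtnec⟩
  have haboveC : ∀ c ∈ C₀, c ∉ AB → ∀ w, c < w → ∃ v ∈ C₀, v ≤ w ∧ c < v := by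
    intro c hc hcAB w hw
    rcases hmemall w with hwC | ⟨t, ht, hwt⟩
    · exact ⟨w, hwC, le_rfl, hw⟩
    · have hcw : c ≠ w := hnC t ht w hwt c hc
      have hatc : c ≤ t.2.1 := (hord1 t ht w hwt c hcw).1.1 hw.le
      have hatnec : t.2.1 ≠ c := by
        intro h
        exact hcAB ⟨t, ht, Or.inl h⟩
      have hwa : t.2.1 ≤ w := (hlt t ht w hwt).1.le
      exact ⟨t.2.1, hABC₀ ⟨t, ht, Or.inl rfl⟩, hwa, lt_of_le_of_ne hatc (Ne.symm hatnec)⟩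
  have hC₀irr : ∀ c ∈ C₀, c ∉ AB → c ∈ IrrSet α := by
    intro c hc hcAB hred
    rcases hred with ⟨y, z, hy, hz, heq⟩ | ⟨y, z, hy, hz, heq⟩
    · have hyc : y < c := lt_of_le_of_ne (heq ▸ le_sup_left) hy
      have hzc : z < c := lt_of_le_of_ne (heq ▸ le_sup_right) hz
      obtain ⟨v0, hv0C, -, hv0c⟩ := hbelowC c hc hcAB y hyc
      have hPch : IsChain (· ≤ ·) (C₀ ∩ Set.Iio c) := hch.mono Set.inter_subset_left
      obtain ⟨p, hp, hpmax⟩ := chain_exists_max hPch ⟨v0, hv0C, hv0c⟩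
      have hwlep : ∀ w, w < c → w ≤ p := by
        intro w hw
        obtain ⟨v, hvC, hwv, hvc⟩ := hbelowC c hc hcAB w hw
        exact hwv.trans (hpmax v ⟨hvC, hvc⟩)
      have : c ≤ p := heq ▸ sup_le (hwlep y hyc) (hwlep z hzc)
      exact absurd hp.2 (not_lt_of_ge this)
    · have hyc : c < y := lt_of_le_of_ne (heq ▸ inf_le_left) (Ne.symm hy)
      have hzc : c < z := lt_of_le_of_ne (heq ▸ inf_le_right) (Ne.symm hz)
      obtain ⟨v0, hv0C, -, hv0c⟩ := haboveC c hc hcAB y hyc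
      have hPch : IsChain (· ≤ ·) (C₀ ∩ Set.Ioi c) := hch.mono Set.inter_subset_left
      obtain ⟨p, hp, hpmin⟩ := chain_exists_min hPch ⟨v0, hv0C, hv0c⟩
      have hwgep : ∀ w, c < w → p ≤ w := by
        intro w hw
        obtain ⟨v, hvC, hwv, hvc⟩ := haboveC c hc hcAB w hw
        exact (hpmin v ⟨hvC, hvc⟩).trans hwv
      have : p ≤ c := heq ▸ le_inf (hwgep y hyc) (hwgep z hzc)
      exact absurd hp.2 (not_lt_of_ge this)
  have hRedAB : RedSet α = AB := by
    apply Set.Subset.antisymm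
    · intro r hr
      rcases hmemall r with hrC | ⟨t, ht, hrt⟩
      · by_contra hrAB
        exact (hC₀irr r hrC hrAB) hr
      · exact absurd hr (hXirr t ht r hrt)
    · exact hABred
  -- the "good" pairs
  set goodP := {p : α × α | (∃ t ∈ l, t.2 = p) ∧ Set.Ioo p.1 p.2 ⊆ IrrSet α} with hgoodPdef
  have hgoodPend : ∀ p ∈ goodP, p.1 ∈ AB ∧ p.2 ∈ AB ∧ p.1 < p.2 := by
    rintro p ⟨⟨t, ht, rfl⟩, hIoo⟩
    exact ⟨⟨t, ht, Or.inl rfl⟩, ⟨t, ht, Or.inr rfl⟩, (hprops t ht).2.2⟩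
  have hgoodPnored : ∀ p ∈ goodP, ∀ r ∈ RedSet α, ¬(p.1 < r ∧ r < p.2) := by
    rintro p ⟨-, hIoo⟩ r hr ⟨h1, h2⟩
    exact (hIoo ⟨h1, h2⟩) hr
  have hgoodPsep : ∀ p ∈ goodP, ∀ q ∈ goodP, p ≠ q → p.2 ≤ q.1 ∨ q.2 ≤ p.1 := by
    intro p hp q hq hne
    obtain ⟨hp1, hp2, hplt⟩ := hgoodPend p hp
    obtain ⟨hq1, hq2, hqlt⟩ := hgoodPend q hq
    have tot : ∀ y ∈ AB, ∀ z ∈ AB, y ≤ z ∨ z ≤ y := by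
      intro y hy z hz
      by_cases hyz : y = z
      · exact Or.inl hyz.le
      · exact (hch (hABC₀ hy) (hABC₀ hz) hyz).imp id id
    by_contra h
    push_neg at h
    obtain ⟨h1, h2⟩ := h
    have hq1p2 : q.1 < p.2 := by
      rcases tot q.1 hq1 p.2 hp2 with h' | h'
      · exact lt_of_le_of_ne h' (fun he => h1 he.ge)
      · exact absurd h' h1
    have hp1q2 : p.1 < q.2 := by
      rcases tot p.1 hp1 q.2 hq2 with h' | h'
      · exact lt_of_le_of_ne h' (fun he => h2 he.ge)
      · exact absurd h' h2
    rcases tot p.1 hp1 q.1 hq1 with hpq | hqp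
    · rcases lt_or_eq_of_le hpq with hlt' | heq'
      · exact hgoodPnored p hp q.1 (hABred hq1) ⟨hlt', hq1p2⟩
      · rcases tot p.2 hp2 q.2 hq2 with h' | h'
        · rcases lt_or_eq_of_le h' with hlt2 | heq2
          · exact hgoodPnored q hq p.2 (hABred hp2) ⟨heq' ▸ hplt, hlt2⟩
          · exact hne (Prod.ext heq' heq2)
        · rcases lt_or_eq_of_le h' with hlt2 | heq2
          · exact hgoodPnored p hp q.2 (hABred hq2) ⟨heq' ▸ hqlt, hlt2⟩
          · exact hne (Prod.ext heq' heq2.symm)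
    · rcases lt_or_eq_of_le hqp with hlt' | heq'
      · exact hgoodPnored q hq p.1 (hABred hp1) ⟨hlt', hp1q2⟩
      · rcases tot p.2 hp2 q.2 hq2 with h' | h'
        · rcases lt_or_eq_of_le h' with hlt2 | heq2
          · exact hgoodPnored q hq p.2 (hABred hp2) ⟨heq'.symm ▸ hplt, hlt2⟩
          · exact hne (Prod.ext heq'.symm heq2)
        · rcases lt_or_eq_of_le h' with hlt2 | heq2
          · exact hgoodPnored p hp q.2 (hABred hq2) ⟨heq' ▸ hqlt, hlt2⟩
          · exact hne (Prod.ext heq'.symm heq2.symm)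
  have hgoodPdisj : ∀ p ∈ goodP, ∀ q ∈ goodP, p ≠ q →
      Disjoint (Set.Ioo p.1 p.2) (Set.Ioo q.1 q.2) := by
    intro p hp q hq hne
    rw [Set.disjoint_left]
    rintro w ⟨h1, h2⟩ ⟨h3, h4⟩
    rcases hgoodPsep p hp q hq hne with h | h
    · exact absurd (h2.trans_le h) (not_lt_of_gt h3)
    · exact absurd (h4.trans_le h) (not_lt_of_gt h1)
  have hgoodPwit : ∀ p : α × α, ∃ z : α, p ∈ goodP → z ∈ C₀ \ AB ∧ z ∈ Set.Ioo p.1 p.2 := by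
    intro p
    by_cases hp : p ∈ goodP
    · obtain ⟨⟨t, ht, htp⟩, hIoo⟩ := hp
      obtain ⟨z, hzC, hz1, hz2⟩ := h7a t ht
      rw [htp] at hz1 hz2
      have hzIoo : z ∈ Set.Ioo p.1 p.2 := ⟨hz1, hz2⟩
      have hzirr := hIoo hzIoo
      have hznAB : z ∉ AB := fun h => hzirr (hABred h)
      exact ⟨z, fun _ => ⟨⟨hzC, hznAB⟩, hzIoo⟩⟩
    · exact ⟨Classical.arbitrary α, fun h => absurd h hp⟩
  set f : α × α → α := fun p => (hgoodPwit p).choose with hfdef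
  have hfspec : ∀ p ∈ goodP, f p ∈ C₀ \ AB ∧ f p ∈ Set.Ioo p.1 p.2 :=
    fun p hp => (hgoodPwit p).choose_spec hp
  have hfinj : Set.InjOn f goodP := by
    intro p hp q hq h
    by_contra hne
    have hd := hgoodPdisj p hp q hq hne
    rw [Set.disjoint_left] at hd
    exact hd (hfspec p hp).2 (h ▸ (hfspec q hq).2)
  have hCIcard : (C₀ \ AB).ncard = m := by
    rw [hRedAB] at hC₀m
    rw [Set.ncard_diff hABC₀ (Set.toFinite _), hC₀m]
    omega
  have himg : f '' goodP = C₀ \ AB := by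
    apply Set.eq_of_subset_of_ncard_le
    · rintro y ⟨p, hp, rfl⟩
      exact (hfspec p hp).1
    · rw [Set.ncard_image_of_injOn hfinj, hCIcard, hm]
    · exact Set.toFinite _
  have hCIcover : ∀ c ∈ C₀ \ AB, ∃ p ∈ goodP, c ∈ Set.Ioo p.1 p.2 ∧
      (∀ c' ∈ C₀ \ AB, c' ∈ Set.Ioo p.1 p.2 → c' = c) := by
    intro c hc
    rw [← himg] at hc
    obtain ⟨p, hp, rfl⟩ := hc
    refine ⟨p, hp, (hfspec p hp).2, ?_⟩
    intro c' hc' hc'Ioo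
    rw [← himg] at hc'
    obtain ⟨q, hq, rfl⟩ := hc'
    by_cases hpq : q = p
    · rw [hpq]
    · have hd := hgoodPdisj q hq p hp hpq
      rw [Set.disjoint_left] at hd
      exact absurd hc'Ioo (hd (hfspec q hq).2)
  -- elements of C₀ \ AB have reducible covers given by their good pair
  have hCI : ∀ c ∈ C₀ \ AB, ∃ p ∈ goodP, p.1 < c ∧ c < p.2 ∧
      (∀ w, w < c → w ≤ p.1) ∧ (∀ w, c < w → p.2 ≤ w) := by
    intro c hc
    obtain ⟨p, hp, hcIoo, huniq⟩ := hCIcover c hc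
    have hredle : ∀ r ∈ RedSet α, r < c → r ≤ p.1 := by
      intro r hr hrc
      have hrC₀ : r ∈ C₀ := hABC₀ (hRedAB ▸ hr)
      have hp1C₀ : p.1 ∈ C₀ := hABC₀ (hgoodPend p hp).1
      by_cases hre : r = p.1
      · exact hre.le
      · rcases hch hrC₀ hp1C₀ hre with h | h
        · exact h
        · exfalso
          exact hgoodPnored p hp r hr ⟨lt_of_le_of_ne h (Ne.symm hre), hrc.trans hcIoo.2⟩
    have hredge : ∀ r ∈ RedSet α, c < r → p.2 ≤ r := by
      intro r hr hrc
      have hrC₀ : r ∈ C₀ := hABC₀ (hRedAB ▸ hr)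
      have hp2C₀ : p.2 ∈ C₀ := hABC₀ (hgoodPend p hp).2.1
      by_cases hre : p.2 = r
      · exact hre.le
      · rcases hch hp2C₀ hrC₀ hre with h | h
        · exact h
        · exfalso
          exact hgoodPnored p hp r hr ⟨hcIoo.1.trans hrc, lt_of_le_of_ne h (Ne.symm hre)⟩
    refine ⟨p, hp, hcIoo.1, hcIoo.2, ?_, ?_⟩
    · intro w hw
      rcases hmemall w with hwC | ⟨t, ht, hwt⟩
      · by_cases hwAB : w ∈ AB
        · exact hredle w (hABred hwAB) hw
        · -- w ∈ C₀ \ AB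
          obtain ⟨q, hq, hwIoo, huq⟩ := hCIcover w ⟨hwC, hwAB⟩
          by_cases hqp : q = p
          · exfalso
            rw [hqp] at hwIoo
            exact absurd (huniq w ⟨hwC, hwAB⟩ hwIoo) hw.ne
          · rcases hgoodPsep q hq p hp hqp with h | h
            · exact (hwIoo.2.trans_le h).le
            · exfalso
              have : p.2 < p.2 := lt_of_le_of_lt h (lt_trans (lt_trans hwIoo.1 hw) hcIoo.2)
              exact lt_irrefl _ this
      · -- w in an adjoined chain
        have hcw : c ≠ w := hnC t ht w hwt c hc.1
        have hbtc : t.2.2 ≤ c := (hord1 t ht w hwt c hcw).2.1 hw.le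
        have hbtne : t.2.2 ≠ c := fun h => hc.2 ⟨t, ht, Or.inr h⟩
        have hbred : t.2.2 ∈ RedSet α := Or.inl (hjr t ht).1
        exact (hlt t ht w hwt).2.le.trans (hredle t.2.2 hbred (lt_of_le_of_ne hbtc hbtne))
    · intro w hw
      rcases hmemall w with hwC | ⟨t, ht, hwt⟩
      · by_cases hwAB : w ∈ AB
        · exact hredge w (hABred hwAB) hw
        · obtain ⟨q, hq, hwIoo, huq⟩ := hCIcover w ⟨hwC, hwAB⟩
          by_cases hqp : q = p
          · exfalso
            rw [hqp] at hwIoo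
            exact absurd (huniq w ⟨hwC, hwAB⟩ hwIoo) hw.ne'
          · rcases hgoodPsep q hq p hp hqp with h | h
            · exfalso
              have : w < w := ((hwIoo.2.trans_le h).trans hcIoo.1).trans hw
              exact lt_irrefl _ this
            · exact h.trans hwIoo.1.le
      · have hcw : c ≠ w := hnC t ht w hwt c hc.1
        have hatc : c ≤ t.2.1 := (hord1 t ht w hwt c hcw).1.1 hw.le
        have hatne : t.2.1 ≠ c := fun h => hc.2 ⟨t, ht, Or.inl h⟩
        have hared : t.2.1 ∈ RedSet α := Or.inr (hjr t ht).2
        exact (hredge t.2.1 hared (lt_of_le_of_ne hatc (Ne.symm hatne))).trans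
          (hlt t ht w hwt).1.le
  -- choose cover data for each irreducible element
  have hABex : ∀ x : α, ∃ q : α × α, x ∈ IrrSet α → (q.1 < x ∧ x < q.2 ∧
      (∀ w, w < x → w ≤ q.1) ∧ (∀ w, x < w → q.2 ≤ w) ∧
      q.1 ∈ RedSet α ∧ q.2 ∈ RedSet α ∧ (∃ z, z ≠ x ∧ q.1 < z ∧ z < q.2)) := by
    intro x
    by_cases hx : x ∈ IrrSet α
    · rcases hmemall x with hxC | ⟨t, ht, hxt⟩
      · have hxAB : x ∉ AB := fun h => hx (hABred h)
        obtain ⟨p, hp, h1, h2, h3, h4⟩ := hCI x ⟨hxC, hxAB⟩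
        refine ⟨p, fun _ => ⟨h1, h2, h3, h4, hABred (hgoodPend p hp).1,
          hABred (hgoodPend p hp).2.1, ?_⟩⟩
        obtain ⟨⟨t, ht, htp⟩, -⟩ := hp
        obtain ⟨x0, hx0⟩ := hsingle t ht
        have hx0t : x0 ∈ t.1 := by rw [hx0]; rfl
        have hx0lt := hlt t ht x0 hx0t
        have e1 : t.2.1 = p.1 := by rw [htp]
        have e2 : t.2.2 = p.2 := by rw [htp]
        refine ⟨x0, Ne.symm (hnC t ht x0 hx0t x hxC), ?_, ?_⟩
        · rw [← e1]; exact hx0lt.1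
        · rw [← e2]; exact hx0lt.2
      · refine ⟨t.2, fun _ => ⟨(hlt t ht x hxt).1, (hlt t ht x hxt).2, ?_, ?_,
          Or.inr (hjr t ht).2, Or.inl (hjr t ht).1, ?_⟩⟩
        · intro w hw
          exact (hord1 t ht x hxt w hw.ne).1.1 hw.le
        · intro w hw
          exact (hord1 t ht x hxt w hw.ne').2.1 hw.le
        · obtain ⟨z, hzC, hz1, hz2⟩ := h7a t ht
          exact ⟨z, hnC t ht x hxt z hzC, hz1, hz2⟩
    · exact ⟨(x, x), fun h => absurd h hx⟩
  set Af : α → α := fun x => ((hABex x).choose).1 with hAfdef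
  set Bf : α → α := fun x => ((hABex x).choose).2 with hBfdef
  have hAlt : ∀ x ∈ IrrSet α, Af x < x := fun x hx => ((hABex x).choose_spec hx).1
  have hBgt : ∀ x ∈ IrrSet α, x < Bf x := fun x hx => ((hABex x).choose_spec hx).2.1
  have hAmax : ∀ x ∈ IrrSet α, ∀ w, w < x → w ≤ Af x :=
    fun x hx => ((hABex x).choose_spec hx).2.2.1
  have hBmin : ∀ x ∈ IrrSet α, ∀ w, x < w → Bf x ≤ w :=
    fun x hx => ((hABex x).choose_spec hx).2.2.2.1
  have hAred : ∀ x ∈ IrrSet α, Af x ∈ RedSet α :=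
    fun x hx => ((hABex x).choose_spec hx).2.2.2.2.1
  have hBred : ∀ x ∈ IrrSet α, Bf x ∈ RedSet α :=
    fun x hx => ((hABex x).choose_spec hx).2.2.2.2.2.1
  have hwit : ∀ x ∈ IrrSet α, ∃ z, z ≠ x ∧ Af x < z ∧ z < Bf x :=
    fun x hx => ((hABex x).choose_spec hx).2.2.2.2.2.2
  have hredNe : (RedSet α).Nonempty := by
    obtain ⟨x0⟩ := (inferInstance : Nonempty α)
    rcases mem_irr_or_red x0 with h | h
    · exact ⟨Af x0, hAred x0 h⟩
    · exact ⟨x0, h⟩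
  have hredChain : IsChain (· ≤ ·) (RedSet α) := by
    rw [hRedAB]
    exact hch.mono hABC₀
  have hCore : Core α Af Bf :=
    ⟨hredChain, hredNe, hAlt, hBgt, hAred, hBred, hAmax, hBmin⟩
  -- the gaps are exactly the good pairs
  have hGaps : Gaps α = goodP := by
    ext p
    constructor
    · rintro ⟨⟨hp1, hp2, hplt, hpcons⟩, w, hw⟩
      rcases hmemall w with hwC | ⟨t, ht, hwt⟩
      · by_cases hwAB : w ∈ AB
        · exact absurd ⟨w, hABred hwAB, hw.1, hw.2⟩ hpcons
        · obtain ⟨q, hq, h1, h2, h3, h4⟩ := hCI w ⟨hwC, hwAB⟩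
          have hq1red := hABred (hgoodPend q hq).1
          have hq2red := hABred (hgoodPend q hq).2.1
          have hq1 : q.1 = p.1 := by
            have hle : p.1 ≤ q.1 := h3 p.1 hw.1
            by_contra hne
            exact hpcons ⟨q.1, hq1red, lt_of_le_of_ne hle (Ne.symm hne), h1.trans hw.2⟩
          have hq2 : q.2 = p.2 := by
            have hle : q.2 ≤ p.2 := h4 p.2 hw.2
            by_contra hne
            exact hpcons ⟨q.2, hq2red, hq1 ▸ (hgoodPend q hq).2.2, lt_of_le_of_ne hle hne⟩
          have : q = p := Prod.ext hq1 hq2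
          exact this ▸ hq
      · have hp1C : p.1 ∈ C₀ := hABC₀ (hRedAB ▸ hp1)
        have hp2C : p.2 ∈ C₀ := hABC₀ (hRedAB ▸ hp2)
        have e1 : t.2.1 = p.1 := by
          have hle : p.1 ≤ t.2.1 :=
            (hord1 t ht w hwt p.1 (hnC t ht w hwt p.1 hp1C)).1.1 hw.1.le
          by_contra hne
          refine hpcons ⟨t.2.1, Or.inr (hjr t ht).2, lt_of_le_of_ne hle (Ne.symm hne), ?_⟩
          exact lt_of_lt_of_le (hprops t ht).2.2
            ((hord1 t ht w hwt p.2 (hnC t ht w hwt p.2 hp2C)).2.1 hw.2.le)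
        have e2 : t.2.2 = p.2 := by
          have hle : t.2.2 ≤ p.2 :=
            (hord1 t ht w hwt p.2 (hnC t ht w hwt p.2 hp2C)).2.1 hw.2.le
          by_contra hne
          refine hpcons ⟨t.2.2, Or.inl (hjr t ht).1, ?_, lt_of_le_of_ne hle hne⟩
          exact lt_of_le_of_lt (e1 ▸ le_rfl) (e1 ▸ (hprops t ht).2.2)
        refine ⟨⟨t, ht, Prod.ext e1 e2⟩, ?_⟩
        intro v hv
        rcases mem_irr_or_red v with h | h
        · exact h
        · exact absurd ⟨v, h, hv.1, hv.2⟩ hpcons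
    · intro hp
      refine ⟨⟨hABred (hgoodPend p hp).1, hABred (hgoodPend p hp).2.1,
        (hgoodPend p hp).2.2, ?_⟩, ?_⟩
      · rintro ⟨r, hr, hr1, hr2⟩
        exact hgoodPnored p hp r hr ⟨hr1, hr2⟩
      · obtain ⟨⟨t, ht, htp⟩, -⟩ := hp
        obtain ⟨x0, hx0⟩ := hsingle t ht
        have hx0t : x0 ∈ t.1 := by rw [hx0]; rfl
        have hx0lt := hlt t ht x0 hx0t
        exact ⟨x0, by rw [← htp]; exact hx0lt.1, by rw [← htp]; exact hx0lt.2⟩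
  have hGapscard : (Gaps α).ncard = m := by
    rw [hGaps]
    exact hm.symm
  have hXcard : (pts l).ncard = k := by
    rw [pts_ncard l hpw hone, hlen]
  have hIrrEq : IrrSet α = (C₀ \ AB) ∪ pts l := by
    ext x
    constructor
    · intro hx
      rcases hmemall x with hxC | hxX
      · exact Or.inl ⟨hxC, fun h => hx (hABred h)⟩
      · exact Or.inr hxX
    · rintro (⟨h1, h2⟩ | ⟨t, ht, hxt⟩)
      · exact hC₀irr _ h1 h2
      · exact hXirr t ht _ hxt
  have hdisjIX : Disjoint (C₀ \ AB) (pts l) := by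
    rw [Set.disjoint_left]
    rintro x ⟨hxC, -⟩ ⟨t, ht, hxt⟩
    exact (hnC t ht x hxt x hxC) rfl
  have hIcard : (IrrSet α).ncard = m + k := by
    rw [hIrrEq, Set.ncard_union_eq hdisjIX (Set.toFinite _) (Set.toFinite _), hCIcard, hXcard]
  have hnull : nullity α = (k : ℤ) := by
    rw [hCore.nullity_eq, hIcard, hGapscard]
    push_cast
    ring
  -- block structure
  obtain ⟨T, hT⟩ := exists_top α
  have hTred : T ∈ RedSet α := by
    rcases mem_irr_or_red T with h | h
    · exact absurd (hBgt T h) (not_lt_of_ge (hT _))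
    · exact h
  have hTjr : JoinReducible T := by
    have hTAB : T ∈ AB := hRedAB ▸ hTred
    obtain ⟨t, ht, h | h⟩ := hTAB
    · exfalso
      have hlt2 := (hprops t ht).2.2
      rw [h] at hlt2
      exact absurd (hT t.2.2) (not_le_of_gt hlt2)
    · exact h ▸ (hjr t ht).1
  obtain ⟨Bo, hBo⟩ := exists_bot α
  have hBored : Bo ∈ RedSet α := by
    rcases mem_irr_or_red Bo with h | h
    · exact absurd (hAlt Bo h) (not_lt_of_ge (hBo _))
    · exact h
  have hBomr : MeetReducible Bo := by
    have hBoAB : Bo ∈ AB := hRedAB ▸ hBored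
    obtain ⟨t, ht, h | h⟩ := hBoAB
    · exact h ▸ (hjr t ht).2
    · exfalso
      have hlt2 := (hprops t ht).2.2
      rw [h] at hlt2
      exact absurd (hBo t.2.1) (not_le_of_gt hlt2)
  have hblock : IsBlock α := ⟨⟨T, hT, hTjr⟩, ⟨Bo, hBo, hBomr⟩⟩
  refine ⟨⟨hblock, Or.inr (Or.inr ?_)⟩, hnull⟩
  intro x hx
  have hxT : x ≠ T := by
    rintro rfl
    exact hx hTred
  have hIooNe : Set.Ioo (Af x) (Bf x) ≠ {x} := by
    obtain ⟨z, hz1, hz2, hz3⟩ := hwit x hx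
    intro h
    have : z ∈ ({x} : Set α) := h ▸ (Set.mem_Ioo.2 ⟨hz2, hz3⟩)
    exact hz1 this
  exact (nullity_compl x (Af x) (Bf x) (hAlt x hx) (hBgt x hx) (hAmax x hx) (hBmin x hx)
    T hT hxT).2 hIooNe


/-- Building an adjunct representation by adjoining singletons one at a time. -/
lemma adjunct_of_list (C₀ : Set α) (hch : IsChain (· ≤ ·) C₀) (hne : C₀.Nonempty)
    (A B : α → α) (L : List α) (hnd : L.Nodup)
    (hmem : ∀ x ∈ L, x ∉ C₀ ∧ A x ∈ C₀ ∧ B x ∈ C₀ ∧ A x < B x ∧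
      (∃ z ∈ C₀, A x < z ∧ z < B x) ∧
      (∀ w, w ≠ x → ((w ≤ x ↔ w ≤ A x) ∧ (x ≤ w ↔ B x ≤ w)))) :
    AdjunctRep C₀ (C₀ ∪ {y | y ∈ L}) (L.map fun x => ({x}, A x, B x)) := by
  induction L using List.reverseRecOn with
  | nil =>
    have h : (C₀ ∪ {y | y ∈ ([] : List α)}) = C₀ := by simp
    rw [h, List.map_nil]
    exact AdjunctRep.base hch hne
  | append_singleton L x ih =>
    have hnd' : L.Nodup := by
      rw [List.nodup_append] at hnd
      exact hnd.1
    have hxL : x ∉ L := by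
      rw [List.nodup_append] at hnd
      intro h
      rcases hnd with ⟨h1, h2, h3⟩
      exact h3 x h x (by simp) rfl
    obtain ⟨hxC, hAC, hBC, hAB, ⟨z, hz, hz1, hz2⟩, hord⟩ := hmem x (by simp)
    have hmem' := fun y (hy : y ∈ L) => hmem y (List.mem_append_left _ hy)
    have hset : ({y | y ∈ L ++ [x]} : Set α) = {y | y ∈ L} ∪ {x} := by
      ext y
      simp only [List.mem_append, List.mem_singleton, Set.mem_union, Set.mem_setOf_eq,
        Set.mem_singleton_iff]
      try tauto
    have hset2 : C₀ ∪ {y | y ∈ L ++ [x]} = (C₀ ∪ {y | y ∈ L}) ∪ {x} := by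
      rw [hset, Set.union_assoc]
    rw [hset2, List.map_append, List.map_singleton]
    refine AdjunctRep.step {x} (A x) (B x) (ih hnd' hmem')
      (Set.subsingleton_singleton.isChain) ⟨x, rfl⟩ ?_ (Or.inl hAC) (Or.inl hBC) hAB
      ⟨z, Or.inl hz, hz1, hz2⟩ ?_
    · rw [Set.disjoint_singleton_right]
      rintro (h | h)
      · exact hxC h
      · exact hxL h
    · intro w hw y hy
      rw [Set.mem_singleton_iff] at hy
      subst hy
      have hwx : w ≠ y := by
        rintro rfl
        rcases hw with h | h
        · exact hxC h
        · exact hxL h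
      exact hord w hwx

/-- The forward direction of the main theorem. -/
lemma forward [Nonempty α] (k : ℕ)
    (hRC : ∀ x y : α, Reducible x → Reducible y → x ≤ y ∨ y ≤ x)
    (hBB : IsBasicBlock α) (hk : nullity α = (k : ℤ)) :
    ∃ (C₀ : Set α) (l : List (Set α × α × α)),
      AdjunctRep C₀ Set.univ l ∧ l.length = k ∧
      (∀ t ∈ l, t.2.1 ∈ C₀ ∧ t.2.2 ∈ C₀) ∧
      (∀ t ∈ l, t.1.ncard = 1) ∧
      {p : α × α | (∃ t ∈ l, t.2 = p) ∧ Set.Ioo p.1 p.2 ⊆ IrrSet α} = Gaps α ∧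
      (IrrSet α).ncard = k + (Gaps α).ncard ∧
      C₀.ncard = (RedSet α).ncard + (Gaps α).ncard := by
  classical
  obtain ⟨hblk, hbasic0⟩ := hBB
  obtain ⟨T, hT, hTjr⟩ := hblk.1
  obtain ⟨Bo, hBo, hBomr⟩ := hblk.2
  have hTred : T ∈ RedSet α := Or.inl hTjr
  have hBored : Bo ∈ RedSet α := Or.inr hBomr
  have hchainRed : IsChain (· ≤ ·) (RedSet α) := fun x hx y hy _ => hRC x y hx hy
  have hcard1 : Nat.card α ≠ 1 := by
    intro h
    have hsub : Subsingleton α := (Nat.card_eq_one_iff_unique.1 h).1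
    obtain ⟨y, z, hy, -, -⟩ := hTjr
    exact hy (Subsingleton.elim y T)
  -- every irreducible is distinct from T and Bo and has elements above and below
  have hirrT : ∀ x ∈ IrrSet α, x ≠ T := by
    rintro x hx rfl; exact hx hTred
  have hirrBo : ∀ x ∈ IrrSet α, x ≠ Bo := by
    rintro x hx rfl; exact hx hBored
  have hbelow : ∀ x ∈ IrrSet α, ∃ w, w < x :=
    fun x hx => ⟨Bo, lt_of_le_of_ne (hBo x) (Ne.symm (hirrBo x hx))⟩
  have habove : ∀ x ∈ IrrSet α, ∃ w, x < w :=
    fun x hx => ⟨T, lt_of_le_of_ne (hT x) (hirrT x hx)⟩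
  -- choose the unique lower and upper covers of irreducible elements
  have hAex : ∀ x : α, ∃ a : α, x ∈ IrrSet α → (a < x ∧ ∀ w, w < x → w ≤ a) := by
    intro x
    by_cases hx : x ∈ IrrSet α
    · obtain ⟨a, h1, h2⟩ := exists_greatest_lt (fun hj => hx (Or.inl hj)) (hbelow x hx)
      exact ⟨a, fun _ => ⟨h1, h2⟩⟩
    · exact ⟨x, fun h => absurd h hx⟩
  have hBex : ∀ x : α, ∃ b : α, x ∈ IrrSet α → (x < b ∧ ∀ w, x < w → b ≤ w) := by
    intro x
    by_cases hx : x ∈ IrrSet α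
    · obtain ⟨b, h1, h2⟩ := exists_least_gt (fun hj => hx (Or.inr hj)) (habove x hx)
      exact ⟨b, fun _ => ⟨h1, h2⟩⟩
    · exact ⟨x, fun h => absurd h hx⟩
  set A : α → α := fun x => (hAex x).choose with hA
  set B : α → α := fun x => (hBex x).choose with hB
  have hAlt : ∀ x ∈ IrrSet α, A x < x := fun x hx => ((hAex x).choose_spec hx).1
  have hAmax : ∀ x ∈ IrrSet α, ∀ w, w < x → w ≤ A x := fun x hx => ((hAex x).choose_spec hx).2
  have hBgt : ∀ x ∈ IrrSet α, x < B x := fun x hx => ((hBex x).choose_spec hx).1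
  have hBmin : ∀ x ∈ IrrSet α, ∀ w, x < w → B x ≤ w := fun x hx => ((hBex x).choose_spec hx).2
  -- the basic-block condition
  have hbasic : ∀ x ∈ IrrSet α, nullity ↥({x}ᶜ : Set α) = nullity α - 1 := by
    rcases hbasic0 with h | h | h
    · exact absurd h hcard1
    · intro x hx; rw [h] at hx; exact absurd hx (Set.notMem_empty x)
    · exact h
  have hIooNe : ∀ x ∈ IrrSet α, Set.Ioo (A x) (B x) ≠ {x} := by
    intro x hx hIoo
    have h := (nullity_compl x (A x) (B x) (hAlt x hx) (hBgt x hx) (hAmax x hx) (hBmin x hx)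
      T hT (hirrT x hx)).1 hIoo
    rw [hbasic x hx] at h
    omega
  -- the covers of irreducibles are reducible
  have hAred : ∀ x ∈ IrrSet α, A x ∈ RedSet α := by
    intro x hx
    rcases mem_irr_or_red (A x) with ha | ha
    · exfalso
      apply hIooNe x hx
      -- A x irreducible : B (A x) = x and Ioo (A x) (B x) = {x}
      have h1 : B (A x) ≤ x := hBmin (A x) ha x (hAlt x hx)
      have h2 : A x < B (A x) := hBgt (A x) ha
      have hcov : A x ⋖ x := (covBy_target_iff (hAlt x hx) (hAmax x hx) (A x)).2 rfl
      have h3 : B (A x) = x := by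
        rcases lt_or_eq_of_le h1 with h | h
        · exact absurd h (hcov.2 h2)
        · exact h
      ext w
      simp only [Set.mem_Ioo, Set.mem_singleton_iff]
      constructor
      · rintro ⟨hw1, hw2⟩
        have hxw : x ≤ w := h3 ▸ hBmin (A x) ha w hw1
        rcases lt_or_eq_of_le hxw with h | h
        · exact absurd hw2 (not_lt_of_ge (hBmin x hx w h))
        · exact h.symm
      · intro hwx
        rw [hwx]
        exact ⟨hAlt x hx, hBgt x hx⟩
    · exact ha
  have hBred : ∀ x ∈ IrrSet α, B x ∈ RedSet α := by
    intro x hx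
    rcases mem_irr_or_red (B x) with hb | hb
    · exfalso
      apply hIooNe x hx
      have h1 : x ≤ A (B x) := hAmax (B x) hb x (hBgt x hx)
      have h2 : A (B x) < B x := hAlt (B x) hb
      have hcov : x ⋖ B x := (covBy_source_iff (hBgt x hx) (hBmin x hx) (B x)).2 rfl
      have h3 : A (B x) = x := by
        rcases lt_or_eq_of_le h1 with h | h
        · exact absurd h2 (hcov.2 h)
        · exact h.symm
      ext w
      simp only [Set.mem_Ioo, Set.mem_singleton_iff]
      constructor
      · rintro ⟨hw1, hw2⟩
        have hwx : w ≤ x := h3 ▸ hAmax (B x) hb w hw2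
        rcases lt_or_eq_of_le hwx with h | h
        · exact absurd hw1 (not_lt_of_ge (hAmax x hx w h))
        · exact h
      · intro hwx
        rw [hwx]
        exact ⟨hAlt x hx, hBgt x hx⟩
    · exact hb
  have hC : Core α A B :=
    ⟨hchainRed, ⟨T, hTred⟩, hAlt, hBgt, hAred, hBred, hAmax, hBmin⟩
  -- counting
  have hnul := hC.nullity_eq
  rw [hk] at hnul
  have hIcount : (IrrSet α).ncard = k + (Gaps α).ncard := by omega
  -- choose representatives of gaps
  have hrepex : ∀ p : α × α, ∃ c : α, p ∈ Gaps α → c ∈ Set.Ioo p.1 p.2 := by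
    intro p
    by_cases hp : p ∈ Gaps α
    · obtain ⟨c, hc⟩ := hp.2
      exact ⟨c, fun _ => hc⟩
    · exact ⟨p.1, fun h => absurd h hp⟩
  set rep : α × α → α := fun p => (hrepex p).choose with hrepdef
  have hrepmem : ∀ p ∈ Gaps α, rep p ∈ Set.Ioo p.1 p.2 := fun p hp => (hrepex p).choose_spec hp
  have hrepinj : Set.InjOn rep (Gaps α) := by
    intro p hp q hq h
    by_contra hne
    have := hC.gaps_disjoint hp hq hne
    rw [Set.disjoint_left] at this
    exact this (hrepmem p hp) (h ▸ hrepmem q hq)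
  set repSet : Set α := rep '' Gaps α with hrepSet
  have hrepIrr : repSet ⊆ IrrSet α := by
    rintro y ⟨p, hp, rfl⟩
    exact (hC.gap_mem hp (rep p) (hrepmem p hp)).1
  have hrepcard : repSet.ncard = (Gaps α).ncard := Set.ncard_image_of_injOn hrepinj
  -- the chain C₀
  set C₀ : Set α := RedSet α ∪ repSet with hC₀
  have hredgap : ∀ r ∈ RedSet α, ∀ p ∈ Gaps α, r ≤ p.1 ∨ p.2 ≤ r := by
    intro r hr p hp
    obtain ⟨⟨hp1, hp2, hplt, hpcons⟩, -⟩ := hp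
    by_cases h1 : r ≤ p.1
    · exact Or.inl h1
    · right
      rcases hchainRed.total hp2 hr with h | h
      · exact h
      · rcases lt_or_eq_of_le h with h' | h'
        · exfalso
          apply hpcons
          refine ⟨r, hr, ?_, h'⟩
          rcases hchainRed.total hp1 hr with h2 | h2
          · exact lt_of_le_of_ne h2 (fun he => h1 he.ge)
          · exact absurd h2 h1
        · exact h'.ge
  have hchainC₀ : IsChain (· ≤ ·) C₀ := by
    rintro y (hy | hy) z (hz | hz) hne
    · exact hchainRed hy hz hne
    · obtain ⟨p, hp, rfl⟩ := hz
      rcases hredgap y hy p hp with h | h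
      · exact Or.inl (h.trans (hrepmem p hp).1.le)
      · exact Or.inr ((hrepmem p hp).2.le.trans h)
    · obtain ⟨p, hp, rfl⟩ := hy
      rcases hredgap z hz p hp with h | h
      · exact Or.inr (h.trans (hrepmem p hp).1.le)
      · exact Or.inl ((hrepmem p hp).2.le.trans h)
    · obtain ⟨p, hp, rfl⟩ := hy
      obtain ⟨q, hq, rfl⟩ := hz
      by_cases hpq : p = q
      · subst hpq; exact absurd rfl hne
      · obtain (h | h) := hC.gaps_separated hp hq hpq
        · exact Or.inl ((hrepmem p hp).2.le.trans (h.trans (hrepmem q hq).1.le))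
        · exact Or.inr ((hrepmem q hq).2.le.trans (h.trans (hrepmem p hp).1.le))
  have hC₀ne : C₀.Nonempty := ⟨T, Or.inl hTred⟩
  have hdisjC₀ : Disjoint (RedSet α) repSet := by
    rw [Set.disjoint_left]
    intro y hy hy'
    exact (hrepIrr hy') hy
  have hC₀card : C₀.ncard = (RedSet α).ncard + (Gaps α).ncard := by
    rw [hC₀, Set.ncard_union_eq hdisjC₀ (Set.toFinite _) (Set.toFinite _), hrepcard]
  -- the list of adjoined elements
  set Lset : Set α := IrrSet α \ repSet with hLset
  set L : List α := Lset.toFinset.toList with hLdef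
  have hLnd : L.Nodup := Finset.nodup_toList _
  have hLmem : ∀ y : α, y ∈ L ↔ y ∈ Lset := by
    intro y
    rw [hLdef, Finset.mem_toList, Set.mem_toFinset]
  have hLlen : L.length = k := by
    rw [hLdef, Finset.length_toList, ← Set.ncard_eq_toFinset_card']
    rw [hLset, Set.ncard_diff hrepIrr (Set.toFinite _), hrepcard, hIcount]
    omega
  -- the ordering conditions
  have hordall : ∀ x ∈ IrrSet α, ∀ w : α, w ≠ x → ((w ≤ x ↔ w ≤ A x) ∧ (x ≤ w ↔ B x ≤ w)) := by
    intro x hx w hw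
    constructor
    · constructor
      · intro h
        exact hAmax x hx w (lt_of_le_of_ne h hw)
      · intro h
        exact h.trans (hAlt x hx).le
    · constructor
      · intro h
        exact hBmin x hx w (lt_of_le_of_ne h (Ne.symm hw))
      · intro h
        exact (hBgt x hx).le.trans h
  have hmemL : ∀ x ∈ L, x ∉ C₀ ∧ A x ∈ C₀ ∧ B x ∈ C₀ ∧ A x < B x ∧
      (∃ z ∈ C₀, A x < z ∧ z < B x) ∧
      (∀ w, w ≠ x → ((w ≤ x ↔ w ≤ A x) ∧ (x ≤ w ↔ B x ≤ w))) := by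
    intro x hx
    rw [hLmem] at hx
    obtain ⟨hxI, hxrep⟩ := hx
    refine ⟨?_, Or.inl (hAred x hxI), Or.inl (hBred x hxI),
      (hAlt x hxI).trans (hBgt x hxI), ?_, hordall x hxI⟩
    · rintro (h | h)
      · exact hxI h
      · exact hxrep h
    · by_cases hg : (A x, B x) ∈ Gaps α
      · exact ⟨rep (A x, B x), Or.inr ⟨_, hg, rfl⟩, hrepmem _ hg⟩
      · -- not a gap: there is a reducible element in between
        have h1 : (Set.Ioo (A x) (B x)).Nonempty := ⟨x, hAlt x hxI, hBgt x hxI⟩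
        have h2 : (A x, B x) ∉ consPairs (RedSet α) := fun h => hg ⟨h, h1⟩
        rw [consPairs] at h2
        simp only [Set.mem_setOf_eq, not_and, not_not] at h2
        obtain ⟨r, hr, hr1, hr2⟩ := h2 (hAred x hxI) (hBred x hxI)
          ((hAlt x hxI).trans (hBgt x hxI))
        exact ⟨r, Or.inl hr, hr1, hr2⟩
  -- assemble
  have hadj := adjunct_of_list C₀ hchainC₀ hC₀ne A B L hLnd hmemL
  have huniv : C₀ ∪ {y | y ∈ L} = Set.univ := by
    ext y
    simp only [Set.mem_union, Set.mem_setOf_eq, Set.mem_univ, iff_true]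
    rcases mem_irr_or_red y with hy | hy
    · by_cases hyr : y ∈ repSet
      · exact Or.inl (Or.inr hyr)
      · exact Or.inr ((hLmem y).2 ⟨hy, hyr⟩)
    · exact Or.inl (Or.inl hy)
  rw [huniv] at hadj
  refine ⟨C₀, L.map fun x => ({x}, A x, B x), hadj, by simpa using hLlen, ?_, ?_, ?_, hIcount, hC₀card⟩
  · rintro t ht
    rw [List.mem_map] at ht
    obtain ⟨x, hx, rfl⟩ := ht
    have hxI := ((hLmem x).1 hx).1
    exact ⟨Or.inl (hAred x hxI), Or.inl (hBred x hxI)⟩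
  · rintro t ht
    rw [List.mem_map] at ht
    obtain ⟨x, hx, rfl⟩ := ht
    exact Set.ncard_singleton x
  · -- the set of good pairs of the list is exactly Gaps α
    ext p
    simp only [Set.mem_setOf_eq]
    constructor
    · rintro ⟨⟨t, ht, hpt⟩, hIoo⟩
      rw [List.mem_map] at ht
      obtain ⟨x, hx, rfl⟩ := ht
      have hxI := ((hLmem x).1 hx).1
      simp only at hpt
      subst hpt
      exact hC.pair_mem_gaps hxI hIoo
    · intro hp
      refine ⟨?_, fun w hw => (hC.gap_mem hp w hw).1⟩
      -- find a non-representative element of the gap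
      have hrp := hrepmem p hp
      have hrpI := hC.gap_mem hp (rep p) hrp
      have hne : Set.Ioo p.1 p.2 ≠ {rep p} := by
        intro h
        apply hIooNe (rep p) hrpI.1
        rw [hrpI.2.1, hrpI.2.2]
        exact h
      have hex : ∃ y ∈ Set.Ioo p.1 p.2, y ≠ rep p := by
        by_contra h
        push_neg at h
        apply hne
        ext y
        simp only [Set.mem_singleton_iff]
        constructor
        · intro hy; exact h y hy
        · rintro rfl; exact hrp
      obtain ⟨y, hy, hyrep⟩ := hex
      have hyI := hC.gap_mem hp y hy
      have hynotrep : y ∉ repSet := by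
        rintro ⟨q, hq, rfl⟩
        by_cases hpq : p = q
        · exact hyrep (by rw [hpq])
        · have := hC.gaps_disjoint hp hq hpq
          rw [Set.disjoint_left] at this
          exact this hy (hrepmem q hq)
      refine ⟨({y}, A y, B y), ?_, ?_⟩
      · rw [List.mem_map]
        exact ⟨y, (hLmem y).2 ⟨hyI.1, hynotrep⟩, rfl⟩
      · simp only
        rw [hyI.2.1, hyI.2.2]

end Main
end Stmt7Aux

/-- Characterization of basic blocks among RC-lattices: an RC-lattice `B` on `n`
elements is a basic block of nullity `k` iff it has an adjunct representation
`B = C₀ ]^{b₁}_{a₁} C₁ ⋯ ]^{b_k}_{a_k} C_k` into chains with all adjunct pairs in `C₀`,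
satisfying (i) `|Cᵢ| = 1` for `1 ≤ i ≤ k`, (ii) `n = |C₀| + k`, (iii) `|Irr(B)| = k + m`
where `m` is the number of distinct adjunct pairs `(a,b)` whose open interval `(a,b)`
is contained in `Irr(B)`, and (iv) `|C₀| = |Red(B)| + m`; and then `n = |Red(B)| + m + k`. -/
theorem stmt7 {α : Type*} [Lattice α] [Fintype α] [Nonempty α] (n k : ℕ)
    (hn : Nat.card α = n)
    (hRC : ∀ x y : α, Reducible x → Reducible y → x ≤ y ∨ y ≤ x) :
    (IsBasicBlock α ∧ nullity α = (k : ℤ)) ↔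
      ∃ (C₀ : Set α) (l : List (Set α × α × α)),
        AdjunctRep C₀ Set.univ l ∧ l.length = k ∧
        (∀ t ∈ l, t.2.1 ∈ C₀ ∧ t.2.2 ∈ C₀) ∧
        (∀ t ∈ l, t.1.ncard = 1) ∧
        ∃ m : ℕ,
          m = {p : α × α | (∃ t ∈ l, t.2 = p) ∧ Set.Ioo p.1 p.2 ⊆ IrrSet α}.ncard ∧
          n = C₀.ncard + k ∧
          (IrrSet α).ncard = k + m ∧
          C₀.ncard = (RedSet α).ncard + m ∧
          n = (RedSet α).ncard + m + k := by
  constructor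
  · rintro ⟨hBB, hnul⟩
    obtain ⟨C₀, l, hadj, hlen, hpairs, hone, hmset, hIcount, hC₀card⟩ :=
      Stmt7Aux.forward k hRC hBB hnul
    have hsplit : Nat.card α = (RedSet α).ncard + (IrrSet α).ncard := by
      have h := Set.ncard_add_ncard_compl (RedSet α)
      have h2 : IrrSet α = (RedSet α)ᶜ := rfl
      rw [h2]
      omega
    refine ⟨C₀, l, hadj, hlen, hpairs, hone, (Stmt7Aux.Gaps α).ncard, ?_, ?_, ?_, ?_, ?_⟩
    · rw [hmset]
    · omega
    · exact hIcount
    · exact hC₀card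
    · omega
  · rintro ⟨C₀, l, hadj, hlen, hpairs, hone, m, hm, -, -, h4, -⟩
    exact Stmt7Aux.backward k m C₀ l hadj hlen hpairs hone hm h4
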